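/- arXiv:2108.03951 — 6 statements merged into one kernel-verified Lean document; each statement's English description precedes it below -/
import Mathlib

section
/- Let X ⊆ ℂⁿ be open and connected, let {Xⱼ} be an increasing sequence of open subsets of X with ∪ⱼ Xⱼ = X, and let p ∈ X₁. Then the sequence C^Δ_{Xⱼ}(p) is non-increasing, each term is ≥ C^Δ_X(p), and lim_{j→∞} C^Δ_{Xⱼ}(p) = C^Δ_X(p). -/
open Metric Set Filter

noncomputable section

/-- The open unit polydisc `Δⁿ ⊂ ℂⁿ`. -/
def polydisc (n : ℕ) : Set (EuclideanSpace ℂ (Fin n)) :=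
  {z | ∀ i, ‖z i‖ < 1}

/-- The polydisc-variant Carathéodory volume coefficient
`C^Δ_Y(p) = sup { |det Df(p)|² : f : Y → Δⁿ holomorphic, f(p) = 0 }`. -/
def caraPoly (n : ℕ) (Y : Set (EuclideanSpace ℂ (Fin n)))
    (p : EuclideanSpace ℂ (Fin n)) : ℝ :=
  sSup {x : ℝ | ∃ f : EuclideanSpace ℂ (Fin n) → EuclideanSpace ℂ (Fin n),
    DifferentiableOn ℂ f Y ∧ MapsTo f Y (polydisc n) ∧ f p = 0 ∧
    x = ‖(fderiv ℂ f p).det‖ ^ 2}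

open Topology

section Aux

variable {E : Type*} [NormedAddCommGroup E] [NormedSpace ℂ E]
variable {G : Type*} [NormedAddCommGroup G] [NormedSpace ℂ G]

lemma line_hasDerivAt {f : E → G} {x : E} (v : E) (hf : DifferentiableAt ℂ f x) (ζ₀ : ℂ)
    (hx : x = ζ₀ • v + (x - ζ₀ • v)) :
    HasDerivAt (fun ζ : ℂ => f (ζ • v + (x - ζ₀ • v))) (fderiv ℂ f x v) ζ₀ := by
  have hφ : HasDerivAt (fun ζ : ℂ => ζ • v + (x - ζ₀ • v)) v ζ₀ := by
    simpa using ((hasDerivAt_id ζ₀).smul_const v).add_const (x - ζ₀ • v)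
  set D := fderiv ℂ f x with hD
  have hfd : HasFDerivAt f D x := hf.hasFDerivAt
  rw [hx] at hfd
  exact hfd.comp_hasDerivAt ζ₀ hφ

/-- Cauchy/Schwarz estimate: several-variable derivative bound. -/
lemma norm_fderiv_le_of_mapsTo {f : E → G} {z : E} {r M : ℝ} (hr : 0 < r) (hM : 0 < M)
    (hd : DifferentiableOn ℂ f (ball z r)) (hmaps : MapsTo f (ball z r) (ball (f z) M)) :
    ‖fderiv ℂ f z‖ ≤ M / r := by
  refine ContinuousLinearMap.opNorm_le_bound _ (div_nonneg hM.le hr.le) fun v => ?_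
  rcases eq_or_ne v 0 with rfl | hv
  · simp
  have hvn : (0:ℝ) < ‖v‖ := norm_pos_iff.2 hv
  set u : E := (‖v‖⁻¹ : ℂ) • v with hu
  have hun : ‖u‖ = 1 := by
    rw [hu, norm_smul]
    simp [inv_mul_cancel₀ hvn.ne']
  set h : ℂ → G := fun ζ => f (ζ • u + z) with hh
  have hmem : ∀ ζ : ℂ, ζ ∈ ball (0:ℂ) r → ζ • u + z ∈ ball z r := by
    intro ζ hζ
    simp only [mem_ball, dist_eq_norm, sub_zero] at hζ ⊢
    simpa [norm_smul, hun] using hζ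
  have hdh : DifferentiableOn ℂ h (ball (0:ℂ) r) := by
    intro ζ hζ
    have : DifferentiableAt ℂ f (ζ • u + z) :=
      hd.differentiableAt (isOpen_ball.mem_nhds (hmem ζ hζ))
    exact (this.comp ζ ((differentiableAt_id.smul_const u).add_const z)).differentiableWithinAt
  have h0 : h 0 = f z := by simp [hh]
  have hmaps' : MapsTo h (ball (0:ℂ) r) (ball (h 0) M) := by
    intro ζ hζ
    rw [h0]
    exact hmaps (hmem ζ hζ)
  have hder : HasDerivAt h (fderiv ℂ f z u) 0 := by
    have := line_hasDerivAt (f := f) (x := z) u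
      (hd.differentiableAt (isOpen_ball.mem_nhds (mem_ball_self hr))) 0 (by simp)
    simpa [hh] using this
  have hbound : ‖deriv h 0‖ ≤ M / r :=
    Complex.norm_deriv_le_div_of_mapsTo_ball hdh (hmaps'.mono_right ball_subset_closedBall) hr
  rw [hder.deriv] at hbound
  have hv' : fderiv ℂ f z v = (‖v‖ : ℂ) • fderiv ℂ f z u := by
    rw [← map_smul]
    congr 1
    rw [hu, smul_smul]
    norm_cast
    rw [mul_inv_cancel₀ hvn.ne', one_smul]
  rw [hv', norm_smul]
  simp only [Complex.norm_real, norm_norm]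
  rw [mul_comm]
  exact mul_le_mul_of_nonneg_right hbound hvn.le

lemma ball_subset_ball_of_center {z x : E} {r s : ℝ} (hx : x ∈ ball z r) :
    ball x s ⊆ ball z (r + s) := by
  intro y hy
  simp only [mem_ball] at *
  calc dist y z ≤ dist y x + dist x z := dist_triangle _ _ _
  _ < s + r := add_lt_add hy hx
  _ = r + s := add_comm _ _

/-- Interior Lipschitz estimate for bounded holomorphic functions. -/
lemma lipschitzOn_of_bounded {f : E → G} {z : E} {r M : ℝ} (hr : 0 < r) (hM : 0 < M)
    (hd : DifferentiableOn ℂ f (ball z (2*r))) (hb : ∀ w ∈ ball z (2*r), ‖f w‖ ≤ M) :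
    ∀ a ∈ ball z r, ∀ b ∈ ball z r, ‖f a - f b‖ ≤ ((2*M+1)/r) * ‖a - b‖ := by
  have hsub : ∀ x ∈ ball z r, ball x r ⊆ ball z (2*r) := by
    intro x hx
    have := ball_subset_ball_of_center (s := r) hx
    rwa [show r + r = 2*r by ring] at this
  have hbound : ∀ x ∈ ball z r, ‖fderiv ℂ f x‖ ≤ (2*M+1)/r := by
    intro x hx
    refine norm_fderiv_le_of_mapsTo hr (by linarith) (hd.mono (hsub x hx)) ?_
    intro w hw
    have hw' := hsub x hx hw
    have hx' : x ∈ ball z (2*r) := by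
      simp only [mem_ball] at hx ⊢; linarith [hx]
    simp only [mem_ball, dist_eq_norm]
    calc ‖f w - f x‖ ≤ ‖f w‖ + ‖f x‖ := norm_sub_le _ _
    _ ≤ M + M := add_le_add (hb w hw') (hb x hx')
    _ < 2*M+1 := by linarith
  intro a ha b hb'
  exact Convex.norm_image_sub_le_of_norm_fderiv_le
    (fun x hx => hd.differentiableAt (isOpen_ball.mem_nhds (hsub x hx (mem_ball_self hr))))
    hbound (convex_ball z r) hb' ha

lemma opNorm_le_of_unit {A : E →L[ℂ] G} {C : ℝ} (hC : 0 ≤ C)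
    (h : ∀ u : E, ‖u‖ = 1 → ‖A u‖ ≤ C) : ‖A‖ ≤ C := by
  refine A.opNorm_le_bound hC fun v => ?_
  rcases eq_or_ne v 0 with rfl | hv
  · simp
  have hvn : (0:ℝ) < ‖v‖ := norm_pos_iff.2 hv
  set u : E := (‖v‖⁻¹ : ℂ) • v with hu
  have hun : ‖u‖ = 1 := by
    rw [hu, norm_smul]; simp [inv_mul_cancel₀ hvn.ne']
  have hv' : A v = (‖v‖ : ℂ) • A u := by
    rw [← map_smul]
    congr 1
    rw [hu, smul_smul]
    norm_cast
    rw [mul_inv_cancel₀ hvn.ne', one_smul]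
  rw [hv', norm_smul]
  simp only [Complex.norm_real, norm_norm]
  rw [mul_comm]
  exact mul_le_mul_of_nonneg_right (h u hun) hvn.le

/-- Interior Lipschitz estimate for the derivative of a bounded holomorphic function. -/
lemma fderiv_lipschitzOn_of_bounded [CompleteSpace G] {f : E → G} {z : E} {r M : ℝ}
    (hr : 0 < r) (hM : 0 < M)
    (hd : DifferentiableOn ℂ f (ball z (8*r))) (hb : ∀ w ∈ ball z (8*r), ‖f w‖ ≤ M) :
    ∀ a ∈ ball z r, ∀ b ∈ ball z r,
      ‖fderiv ℂ f a - fderiv ℂ f b‖ ≤ ((2*M+1)/(r*r)) * ‖a - b‖ := by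
  have h42 : ∀ w ∈ ball z (2*(2*r)), ‖f w‖ ≤ M := by
    intro w hw
    refine hb w ?_
    simp only [mem_ball] at hw ⊢; linarith [hw]
  have hLip := lipschitzOn_of_bounded (r := 2*r) (by linarith) hM
    (hd.mono (by apply ball_subset_ball; linarith)) h42
  intro a ha b hb'
  have key : ∀ u : E, ‖u‖ = 1 →
      ‖(fderiv ℂ f a - fderiv ℂ f b) u‖ ≤ ((2*M+1)/(2*r)) * ‖a - b‖ / r := by
    intro u hun
    set ha' : ℂ → G := fun ζ => f (ζ • u + a) with hha
    set hb'' : ℂ → G := fun ζ => f (ζ • u + b) with hhb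
    have hmem : ∀ c : E, c ∈ ball z r → ∀ ζ : ℂ, ζ ∈ ball (0:ℂ) (2*r) →
        ζ • u + c ∈ ball z (8*r) := by
      intro c hc ζ hζ
      simp only [mem_ball, dist_eq_norm, sub_zero] at hc hζ ⊢
      calc ‖ζ • u + c - z‖ ≤ ‖ζ • u‖ + ‖c - z‖ := by
            rw [add_sub_assoc]; exact norm_add_le _ _
      _ < 2*r + r := by rw [norm_smul, hun, mul_one]; exact add_lt_add hζ hc
      _ ≤ 8*r := by linarith
    have hdc : ∀ c : E, c ∈ ball z r → DifferentiableOn ℂ (fun ζ : ℂ => f (ζ • u + c))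
        (ball (0:ℂ) (2*r)) := by
      intro c hc ζ hζ
      have : DifferentiableAt ℂ f (ζ • u + c) :=
        hd.differentiableAt (isOpen_ball.mem_nhds (hmem c hc ζ hζ))
      exact (this.comp ζ ((differentiableAt_id.smul_const u).add_const c)).differentiableWithinAt
    have hcball : closedBall (0:ℂ) r ⊆ ball (0:ℂ) (2*r) :=
      closedBall_subset_ball (by linarith)
    have hderc : ∀ c : E, c ∈ ball z r →
        Complex.cderiv r (fun ζ : ℂ => f (ζ • u + c)) 0 = fderiv ℂ f c u := by
      intro c hc
      rw [Complex.cderiv_eq_deriv isOpen_ball (hdc c hc) hr hcball]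
      have hc8 : c ∈ ball z (8*r) := by
        have := hmem c hc 0 (mem_ball_self (by linarith))
        simpa using this
      have := line_hasDerivAt (f := f) (x := c) u
        (hd.differentiableAt (isOpen_ball.mem_nhds hc8)) 0 (by simp)
      simpa using this.deriv
    have hsphere : sphere (0:ℂ) r ⊆ ball (0:ℂ) (2*r) := by
      intro ζ hζ
      simp only [mem_sphere, mem_ball] at hζ ⊢
      rw [hζ]; linarith
    have hsub : Complex.cderiv r (ha' - hb'') 0 =
        Complex.cderiv r ha' 0 - Complex.cderiv r hb'' 0 :=
      Complex.cderiv_sub hr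
        (((hdc a ha).continuousOn).mono hsphere)
        (((hdc b hb').continuousOn).mono hsphere)
    have hbnd : ∀ ζ ∈ sphere (0:ℂ) r, ‖(ha' - hb'') ζ‖ ≤ ((2*M+1)/(2*r)) * ‖a - b‖ := by
      intro ζ hζ
      have hζ' : ζ ∈ ball (0:ℂ) (2*r) := hsphere hζ
      have hma : ζ • u + a ∈ ball z (2*r) := by
        simp only [mem_ball, dist_eq_norm] at ha hζ' ⊢
        calc ‖ζ • u + a - z‖ ≤ ‖ζ • u‖ + ‖a - z‖ := by
              rw [add_sub_assoc]; exact norm_add_le _ _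
        _ < r + r := by
              rw [norm_smul, hun, mul_one]
              have : ‖ζ‖ = r := by simpa [mem_sphere, dist_eq_norm] using hζ
              rw [this]; exact add_lt_add_right ha _
        _ ≤ 2*r := by linarith
      have hmb : ζ • u + b ∈ ball z (2*r) := by
        simp only [mem_ball, dist_eq_norm] at hb' ⊢
        calc ‖ζ • u + b - z‖ ≤ ‖ζ • u‖ + ‖b - z‖ := by
              rw [add_sub_assoc]; exact norm_add_le _ _
        _ < r + r := by
              rw [norm_smul, hun, mul_one]
              have : ‖ζ‖ = r := by simpa [mem_sphere, dist_eq_norm] using hζ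
              rw [this]; exact add_lt_add_right hb' _
        _ ≤ 2*r := by linarith
      have := hLip _ hma _ hmb
      simp only [Pi.sub_apply, hha, hhb]
      have heq : ζ • u + a - (ζ • u + b) = a - b := by abel
      rw [heq] at this
      exact this
    have := Complex.norm_cderiv_le hr hbnd
    rw [hsub] at this
    rw [hderc a ha, hderc b hb'] at this
    simpa using this
  have hfin : ‖fderiv ℂ f a - fderiv ℂ f b‖ ≤ ((2*M+1)/(2*r)) * ‖a - b‖ / r := by
    refine opNorm_le_of_unit ?_ key
    positivity
  calc ‖fderiv ℂ f a - fderiv ℂ f b‖ ≤ ((2*M+1)/(2*r)) * ‖a - b‖ / r := hfin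
  _ ≤ ((2*M+1)/(r*r)) * ‖a - b‖ := by
      rw [div_mul_eq_mul_div, div_mul_eq_mul_div, div_div]
      gcongr
      nlinarith

lemma tlu_congr_ev {α β ι : Type*} [UniformSpace α] [TopologicalSpace β]
    {F F' : ι → β → α} {f : β → α} {l : Filter ι} {s : Set β}
    (h : ∀ᶠ j in l, F j = F' j) (H : TendstoLocallyUniformlyOn F f l s) :
    TendstoLocallyUniformlyOn F' f l s := by
  intro u hu x hx
  obtain ⟨t, ht, hev⟩ := H u hu x hx
  exact ⟨t, ht, (hev.and h).mono fun j ⟨h1, h2⟩ y hy => h2 ▸ h1 y hy⟩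

lemma tlu_of_lipschitz {B : Type*} [PseudoMetricSpace B] {ι : Type*} {l : Filter ι} [l.NeBot]
    {φ : ι → E → B} {ψ : E → B} {s : Set E}
    (hconv : ∀ x ∈ s, Tendsto (fun j => φ j x) l (𝓝 (ψ x)))
    (hlip : ∀ x ∈ s, ∃ C > (0:ℝ), ∃ δ > (0:ℝ), ∀ᶠ j in l,
      ∀ a ∈ ball x δ, ∀ b ∈ ball x δ, dist (φ j a) (φ j b) ≤ C * dist a b) :
    TendstoLocallyUniformlyOn φ ψ l s := by
  rw [Metric.tendstoLocallyUniformlyOn_iff]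
  intro ε hε x hx
  obtain ⟨C, hC, δ, hδ, hev⟩ := hlip x hx
  set δ' := min δ (ε/(3*C)) with hδ'def
  have hδ' : 0 < δ' := lt_min hδ (by positivity)
  have hψlip : ∀ a ∈ ball x δ ∩ s, ∀ b ∈ ball x δ ∩ s, dist (ψ a) (ψ b) ≤ C * dist a b := by
    rintro a ⟨ha1, ha2⟩ b ⟨hb1, hb2⟩
    have ht := (hconv a ha2).dist (hconv b hb2)
    exact le_of_tendsto ht (hev.mono fun j hj => hj a ha1 b hb1)
  have hev2 : ∀ᶠ j in l, dist (ψ x) (φ j x) < ε/3 := by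
    have := Metric.tendsto_nhds.mp (hconv x hx) (ε/3) (by positivity)
    exact this.mono fun j hj => by rwa [dist_comm]
  refine ⟨ball x δ' ∩ s,
    Filter.inter_mem (mem_nhdsWithin_of_mem_nhds (ball_mem_nhds x hδ')) self_mem_nhdsWithin, ?_⟩
  refine (hev.and hev2).mono ?_
  rintro j ⟨hj1, hj2⟩ y ⟨hy1, hy2⟩
  have hyδ : y ∈ ball x δ := ball_subset_ball (min_le_left _ _) hy1
  have hxδ : x ∈ ball x δ := mem_ball_self hδ
  have hCd : C * dist y x < ε/3 := by
    have h1 : dist y x < δ' := mem_ball.1 hy1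
    have h2 : δ' ≤ ε/(3*C) := min_le_right _ _
    calc C * dist y x < C * δ' := by
          exact mul_lt_mul_of_pos_left (lt_of_lt_of_le h1 le_rfl) hC
    _ ≤ C * (ε/(3*C)) := mul_le_mul_of_nonneg_left h2 hC.le
    _ = ε/3 := by field_simp
  have b1 : dist (ψ y) (ψ x) ≤ C * dist y x := hψlip y ⟨hyδ, hy2⟩ x ⟨hxδ, hx⟩
  have b3 : dist (φ j x) (φ j y) ≤ C * dist y x := by
    calc dist (φ j x) (φ j y) ≤ C * dist x y := hj1 x hxδ y hyδ
    _ = C * dist y x := by rw [dist_comm]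
  calc dist (ψ y) (φ j y) ≤ dist (ψ y) (ψ x) + dist (ψ x) (φ j x) + dist (φ j x) (φ j y) :=
        dist_triangle4 _ _ _ _
  _ < ε/3 + ε/3 + ε/3 := by
      refine add_lt_add (add_lt_add_of_le_of_lt (le_trans b1 hCd.le) hj2) ?_
      · exact lt_of_le_of_lt b3 hCd
  _ = ε := by ring

end Aux

section CarSet

/-- The competitor set whose supremum is `caraPoly`. -/
def carSet (n : ℕ) (Y : Set (EuclideanSpace ℂ (Fin n)))
    (p : EuclideanSpace ℂ (Fin n)) : Set ℝ :=
  {x : ℝ | ∃ f : EuclideanSpace ℂ (Fin n) → EuclideanSpace ℂ (Fin n),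
    DifferentiableOn ℂ f Y ∧ MapsTo f Y (polydisc n) ∧ f p = 0 ∧
    x = ‖(fderiv ℂ f p).det‖ ^ 2}

lemma caraPoly_eq (n : ℕ) (Y : Set (EuclideanSpace ℂ (Fin n)))
    (p : EuclideanSpace ℂ (Fin n)) : caraPoly n Y p = sSup (carSet n Y p) := rfl

lemma coord_norm_le_sqrt (n : ℕ) {z : EuclideanSpace ℂ (Fin n)} (h : ∀ i, ‖z i‖ ≤ 1) :
    ‖z‖ ≤ Real.sqrt n := by
  rw [EuclideanSpace.norm_eq]
  refine Real.sqrt_le_sqrt ?_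
  calc (∑ i, ‖z i‖^2) ≤ ∑ _i : Fin n, (1:ℝ) := by
        refine Finset.sum_le_sum fun i _ => ?_
        have := h i; nlinarith [norm_nonneg (z i)]
  _ = n := by simp

lemma carSet_nonempty (n : ℕ) (Y : Set (EuclideanSpace ℂ (Fin n)))
    (p : EuclideanSpace ℂ (Fin n)) : (carSet n Y p).Nonempty := by
  refine ⟨_, fun _ => 0, differentiableOn_const _, fun w _ => ?_, rfl, rfl⟩
  intro i
  simp [polydisc]

lemma carSet_mono (n : ℕ) {Y Y' : Set (EuclideanSpace ℂ (Fin n))}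
    (p : EuclideanSpace ℂ (Fin n)) (h : Y ⊆ Y') : carSet n Y' p ⊆ carSet n Y p := by
  rintro x ⟨f, hd, hm, hp, hx⟩
  exact ⟨f, hd.mono h, hm.mono_left h, hp, hx⟩

instance properCLM (n : ℕ) :
    ProperSpace (EuclideanSpace ℂ (Fin n) →L[ℂ] EuclideanSpace ℂ (Fin n)) :=
  FiniteDimensional.proper ℂ _

lemma carSet_bddAbove (n : ℕ) {Y : Set (EuclideanSpace ℂ (Fin n))}
    {p : EuclideanSpace ℂ (Fin n)} {r : ℝ} (hr : 0 < r) (hball : ball p r ⊆ Y) :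
    BddAbove (carSet n Y p) := by
  set K : ℝ := (Real.sqrt n + 1) / r with hK
  have hKnn : 0 ≤ K := by positivity
  have hcompact : IsCompact (closedBall (0 : EuclideanSpace ℂ (Fin n) →L[ℂ]
      EuclideanSpace ℂ (Fin n)) K) := isCompact_closedBall _ _
  have hcont : ContinuousOn
      (fun A : EuclideanSpace ℂ (Fin n) →L[ℂ] EuclideanSpace ℂ (Fin n) => ‖A.det‖^2)
      (closedBall 0 K) := (ContinuousLinearMap.continuous_det.norm.pow 2).continuousOn
  obtain ⟨A₀, -, hA₀⟩ := hcompact.exists_isMaxOn ⟨0, mem_closedBall_self hKnn⟩ hcont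
  refine ⟨‖A₀.det‖^2, ?_⟩
  rintro x ⟨f, hd, hm, hp0, rfl⟩
  have hkey : fderiv ℂ f p ∈ closedBall (0 : EuclideanSpace ℂ (Fin n) →L[ℂ]
      EuclideanSpace ℂ (Fin n)) K := by
    rw [mem_closedBall_zero_iff]
    refine norm_fderiv_le_of_mapsTo hr (by positivity) (hd.mono hball) ?_
    intro w hw
    have := hm (hball hw)
    rw [mem_ball, hp0, dist_zero_right]
    have h1 : ‖f w‖ ≤ Real.sqrt n := coord_norm_le_sqrt n fun i => (this i).le
    linarith
  exact hA₀ hkey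

end CarSet

theorem stmt_7 (n : ℕ) (X : Set (EuclideanSpace ℂ (Fin n)))
    (hXo : IsOpen X) (hXc : IsConnected X)
    (Xs : ℕ → Set (EuclideanSpace ℂ (Fin n)))
    (hmono : Monotone Xs) (hopen : ∀ j, IsOpen (Xs j))
    (hsub : ∀ j, Xs j ⊆ X) (hunion : ⋃ j, Xs j = X)
    (p : EuclideanSpace ℂ (Fin n)) (hp : p ∈ Xs 0) :
    (∀ j, caraPoly n (Xs (j + 1)) p ≤ caraPoly n (Xs j) p) ∧
    (∀ j, caraPoly n X p ≤ caraPoly n (Xs j) p) ∧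
    Tendsto (fun j => caraPoly n (Xs j) p) atTop (nhds (caraPoly n X p)) := by
  obtain ⟨r₀, hr₀, hball₀⟩ := Metric.isOpen_iff.1 (hopen 0) p hp
  have hpX : p ∈ X := hsub 0 hp
  have hbdd : ∀ j, BddAbove (carSet n (Xs j) p) := fun j =>
    carSet_bddAbove n hr₀ (hball₀.trans (hmono (Nat.zero_le j)))
  have hbddX : BddAbove (carSet n X p) := carSet_bddAbove n hr₀ (hball₀.trans (hsub 0))
  have part1 : ∀ j, caraPoly n (Xs (j + 1)) p ≤ caraPoly n (Xs j) p := fun j =>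
    csSup_le_csSup (hbdd j) (carSet_nonempty n _ p) (carSet_mono n p (hmono (Nat.le_succ j)))
  have part2 : ∀ j, caraPoly n X p ≤ caraPoly n (Xs j) p := fun j =>
    csSup_le_csSup (hbdd j) (carSet_nonempty n _ p) (carSet_mono n p (hsub j))
  refine ⟨part1, part2, ?_⟩
  set c : ℕ → ℝ := fun j => caraPoly n (Xs j) p with hc
  have hanti : Antitone c := antitone_nat_of_succ_le part1
  have hbb : BddBelow (Set.range c) := by
    refine ⟨caraPoly n X p, ?_⟩
    rintro _ ⟨j, rfl⟩
    exact part2 j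
  set L : ℝ := ⨅ j, c j with hL
  have hct : Tendsto c atTop (𝓝 L) := tendsto_atTop_ciInf hanti hbb
  suffices hLX : caraPoly n X p = L by rw [hLX]; exact hct
  have h1 : caraPoly n X p ≤ L := le_ciInf part2
  refine le_antisymm h1 ?_
  -- choose near-extremal competitors
  have hchoice : ∀ j : ℕ, ∃ x, x ∈ carSet n (Xs j) p ∧ c j - 1/((j:ℝ)+1) < x := by
    intro j
    have hpos : (0:ℝ) < 1/((j:ℝ)+1) := by positivity
    obtain ⟨x, hx1, hx2⟩ := exists_lt_of_lt_csSup (carSet_nonempty n (Xs j) p)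
      (show c j - 1/((j:ℝ)+1) < sSup (carSet n (Xs j) p) by
        rw [← caraPoly_eq]; simp only [hc]; linarith)
    exact ⟨x, hx1, hx2⟩
  choose a ha using hchoice
  have hmemcar : ∀ j, ∃ fj, DifferentiableOn ℂ fj (Xs j) ∧ MapsTo fj (Xs j) (polydisc n) ∧
      fj p = 0 ∧ a j = ‖(fderiv ℂ fj p).det‖ ^ 2 := fun j => (ha j).1
  choose f hfd hfm hfp hfa using hmemcar
  have hau : ∀ j, a j ≤ c j := fun j => le_csSup (hbdd j) (ha j).1
  have haL : Tendsto a atTop (𝓝 L) := by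
    have hlower : Tendsto (fun j : ℕ => c j - 1/((j:ℝ)+1)) atTop (𝓝 L) := by
      have := hct.sub tendsto_one_div_add_atTop_nhds_zero_nat
      simpa using this
    exact tendsto_of_tendsto_of_tendsto_of_le_of_le hlower hct
      (fun j => (ha j).2.le) hau
  -- the ultrafilter
  set 𝒰 : Ultrafilter ℕ := Ultrafilter.of atTop with h𝒰def
  have h𝒰 : (𝒰 : Filter ℕ) ≤ atTop := Ultrafilter.of_le _
  -- constants and local geometry
  set M₁ : ℝ := Real.sqrt n + 1 with hM₁
  have hM₁pos : 0 < M₁ := by positivity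
  have hfb : ∀ j, ∀ w ∈ Xs j, ‖f j w‖ ≤ M₁ := by
    intro j w hw
    have := coord_norm_le_sqrt n fun i => (hfm j hw i).le
    linarith
  have hloc : ∀ z ∈ X, ∃ (J : ℕ) (ρ : ℝ), 0 < ρ ∧ ball z (8*ρ) ⊆ Xs J := by
    intro z hz
    rw [← hunion] at hz
    obtain ⟨J, hzJ⟩ := mem_iUnion.1 hz
    obtain ⟨ρ', hρ', hb⟩ := Metric.isOpen_iff.1 (hopen J) z hzJ
    refine ⟨J, ρ'/8, by positivity, ?_⟩
    rw [show 8*(ρ'/8) = ρ' by ring]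
    exact hb
  set F : ℕ → EuclideanSpace ℂ (Fin n) →
      (EuclideanSpace ℂ (Fin n) →L[ℂ] EuclideanSpace ℂ (Fin n)) :=
    fun j w => fderiv ℂ (f j) w with hF
  -- local estimates, valid for all j ≥ J
  have hest : ∀ z ∈ X, ∃ (J : ℕ) (ρ : ℝ), 0 < ρ ∧ ball z (8*ρ) ⊆ Xs J ∧
      ∀ j, J ≤ j →
        (∀ aa ∈ ball z ρ, ‖F j aa‖ ≤ (2*M₁+1)/ρ) ∧
        (∀ aa ∈ ball z ρ, ∀ bb ∈ ball z ρ,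
          ‖f j aa - f j bb‖ ≤ ((2*M₁+1)/ρ) * ‖aa - bb‖) ∧
        (∀ aa ∈ ball z ρ, ∀ bb ∈ ball z ρ,
          ‖F j aa - F j bb‖ ≤ ((2*M₁+1)/(ρ*ρ)) * ‖aa - bb‖) := by
    intro z hz
    obtain ⟨J, ρ, hρ, hbJ⟩ := hloc z hz
    refine ⟨J, ρ, hρ, hbJ, ?_⟩
    intro j hJj
    have hbj : ball z (8*ρ) ⊆ Xs j := hbJ.trans (hmono hJj)
    have hdj : DifferentiableOn ℂ (f j) (ball z (8*ρ)) := (hfd j).mono hbj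
    have hbnd : ∀ w ∈ ball z (8*ρ), ‖f j w‖ ≤ M₁ := fun w hw => hfb j w (hbj hw)
    have hsub2 : ball z (2*ρ) ⊆ ball z (8*ρ) := ball_subset_ball (by linarith)
    refine ⟨?_, ?_, ?_⟩
    · -- derivative bound
      intro aa haa
      have hba : ball aa ρ ⊆ ball z (2*ρ) := by
        have := ball_subset_ball_of_center (s := ρ) haa
        rwa [show ρ + ρ = 2*ρ by ring] at this
      refine norm_fderiv_le_of_mapsTo hρ (by linarith) (hdj.mono (hba.trans hsub2)) ?_
      intro w hw
      have hw' : w ∈ ball z (8*ρ) := hsub2 (hba hw)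
      have haa' : aa ∈ ball z (8*ρ) := hsub2 (hba (mem_ball_self hρ))
      rw [mem_ball, dist_eq_norm]
      calc ‖f j w - f j aa‖ ≤ ‖f j w‖ + ‖f j aa‖ := norm_sub_le _ _
      _ ≤ M₁ + M₁ := add_le_add (hbnd w hw') (hbnd aa haa')
      _ < 2*M₁+1 := by linarith
    · -- Lipschitz bound for f j
      exact lipschitzOn_of_bounded hρ hM₁pos (hdj.mono hsub2)
        (fun w hw => hbnd w (hsub2 hw))
    · -- Lipschitz bound for F j
      exact fderiv_lipschitzOn_of_bounded hρ hM₁pos hdj hbnd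
  -- pointwise limits of f along the ultrafilter
  set K₀ : Set (EuclideanSpace ℂ (Fin n)) := {w | ∀ i, ‖w i‖ ≤ 1} with hK₀
  have hK₀closed : IsClosed K₀ := by
    have : K₀ = ⋂ i, {w : EuclideanSpace ℂ (Fin n) |
        ‖(EuclideanSpace.proj (𝕜 := ℂ) i) w‖ ≤ 1} := by
      ext w; simp [hK₀, EuclideanSpace.proj]
    rw [this]
    exact isClosed_iInter fun i =>
      isClosed_le ((EuclideanSpace.proj (𝕜 := ℂ) i).continuous.norm) continuous_const
  have hK₀compact : IsCompact K₀ := by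
    refine (isCompact_closedBall (0 : EuclideanSpace ℂ (Fin n)) (Real.sqrt n)).of_isClosed_subset
      hK₀closed ?_
    intro w hw
    rw [mem_closedBall_zero_iff]
    exact coord_norm_le_sqrt n hw
  have hmemK : ∀ z ∈ X, ∀ᶠ j in (𝒰 : Filter ℕ), f j z ∈ K₀ := by
    intro z hz
    rw [← hunion] at hz
    obtain ⟨J, hzJ⟩ := mem_iUnion.1 hz
    refine ((eventually_ge_atTop J).filter_mono h𝒰).mono ?_
    intro j hj i
    exact (hfm j (hmono hj hzJ) i).le
  have hlimg : ∀ z : EuclideanSpace ℂ (Fin n), ∃ w, z ∈ X →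
      (w ∈ K₀ ∧ Tendsto (fun j => f j z) (𝒰 : Filter ℕ) (𝓝 w)) := by
    intro z
    by_cases hz : z ∈ X
    · obtain ⟨w, hwK, hw⟩ := hK₀compact.ultrafilter_le_nhds
        (Ultrafilter.map (fun j => f j z) 𝒰)
        (by rw [le_principal_iff]; exact hmemK z hz)
      exact ⟨w, fun _ => ⟨hwK, hw⟩⟩
    · exact ⟨0, fun h => absurd h hz⟩
  choose g hg using hlimg
  -- pointwise limits of the derivatives along the ultrafilter
  have hlimG : ∀ z : EuclideanSpace ℂ (Fin n), ∃ A, z ∈ X →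
      Tendsto (fun j => F j z) (𝒰 : Filter ℕ) (𝓝 A) := by
    intro z
    by_cases hz : z ∈ X
    · obtain ⟨J, ρ, hρ, hbJ, hJ⟩ := hest z hz
      have hmemC : ∀ᶠ j in (𝒰 : Filter ℕ), F j z ∈ closedBall
          (0 : EuclideanSpace ℂ (Fin n) →L[ℂ] EuclideanSpace ℂ (Fin n)) ((2*M₁+1)/ρ) := by
        refine ((eventually_ge_atTop J).filter_mono h𝒰).mono ?_
        intro j hj
        rw [mem_closedBall_zero_iff]
        exact (hJ j hj).1 z (mem_ball_self hρ)
      obtain ⟨A, -, hA⟩ := (isCompact_closedBall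
          (0 : EuclideanSpace ℂ (Fin n) →L[ℂ] EuclideanSpace ℂ (Fin n)) ((2*M₁+1)/ρ)).ultrafilter_le_nhds
        (Ultrafilter.map (fun j => F j z) 𝒰)
        (by rw [le_principal_iff]; exact hmemC)
      exact ⟨A, fun _ => hA⟩
    · exact ⟨0, fun h => absurd h hz⟩
  choose G hG using hlimG
  -- locally uniform convergence
  have htluF : TendstoLocallyUniformlyOn F G (𝒰 : Filter ℕ) X := by
    refine tlu_of_lipschitz (fun x hx => hG x hx) ?_
    intro x hx
    obtain ⟨J, ρ, hρ, hbJ, hJ⟩ := hest x hx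
    refine ⟨(2*M₁+1)/(ρ*ρ), by positivity, ρ, hρ, ?_⟩
    refine ((eventually_ge_atTop J).filter_mono h𝒰).mono ?_
    intro j hj aa haa bb hbb
    rw [dist_eq_norm, dist_eq_norm]
    exact (hJ j hj).2.2 aa haa bb hbb
  -- derivative of g
  have hDg : ∀ x ∈ X, HasFDerivAt g (G x) x := by
    intro x hx
    obtain ⟨J, ρ, hρ, hbJ, hJ⟩ := hest x hx
    have hballX : ball x ρ ⊆ X := (ball_subset_ball (by linarith)).trans (hbJ.trans (hsub J))
    have hevJ : ∀ᶠ j in (𝒰 : Filter ℕ), J ≤ j := (eventually_ge_atTop J).filter_mono h𝒰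
    refine hasFDerivAt_of_tendstoLocallyUniformlyOn (l := (𝒰 : Filter ℕ)) isOpen_ball
      (f := fun j => f (max j J)) (f' := fun j w => F (max j J) w) (g' := G) ?_ ?_ ?_
      (mem_ball_self hρ)
    · refine tlu_congr_ev ?_ (htluF.mono hballX)
      exact hevJ.mono fun j hj => by rw [show max j J = j by omega]
    · intro j w hw
      have hwmem : w ∈ Xs (max j J) := hmono (le_max_right j J)
        (hbJ (ball_subset_ball (by linarith) hw))
      exact ((hfd (max j J)).differentiableAt
        ((hopen (max j J)).mem_nhds hwmem)).hasFDerivAt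
    · intro w hw
      refine ((hg w (hballX hw)).2).congr' ?_
      refine hevJ.mono fun j hj => ?_
      show f j w = f (max j J) w
      rw [show max j J = j by omega]
  have hgdiff : DifferentiableOn ℂ g X := fun w hw =>
    (hDg w hw).differentiableAt.differentiableWithinAt
  -- g p = 0
  have hgp0 : g p = 0 := by
    refine tendsto_nhds_unique (hg p hpX).2 ?_
    have : (fun j => f j p) = fun _ => (0 : EuclideanSpace ℂ (Fin n)) := funext fun j => hfp j
    rw [this]
    exact tendsto_const_nhds
  -- the determinant value
  have hdet : ‖(G p).det‖^2 = L := by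
    have t1 : Tendsto (fun j => ‖(F j p).det‖^2) (𝒰 : Filter ℕ) (𝓝 (‖(G p).det‖^2)) :=
      ((ContinuousLinearMap.continuous_det.norm.pow 2).tendsto (G p)).comp (hG p hpX)
    have t2 : Tendsto (fun j => ‖(F j p).det‖^2) (𝒰 : Filter ℕ) (𝓝 L) := by
      have := haL.mono_left h𝒰
      refine this.congr fun j => ?_
      exact hfa j
    exact tendsto_nhds_unique t1 t2
  -- g maps into the open polydisc
  have hgmaps : MapsTo g X (polydisc n) := by
    intro z hz
    intro i
    by_contra hcon
    have hle1 : ‖g z i‖ ≤ 1 := (hg z hz).1 i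
    have heq1 : ‖g z i‖ = 1 := le_antisymm hle1 (not_lt.1 hcon)
    set φ : EuclideanSpace ℂ (Fin n) → ℂ := fun w => g w i with hφ
    have hφd : DifferentiableOn ℂ φ X := by
      have : DifferentiableOn ℂ ((EuclideanSpace.proj (𝕜 := ℂ) i) ∘ g) X :=
        (EuclideanSpace.proj (𝕜 := ℂ) i).differentiable.comp_differentiableOn hgdiff
      exact this
    have hmax : IsMaxOn (norm ∘ φ) X z := by
      intro w hw
      simp only [Function.comp_apply, hφ]
      rw [heq1]
      exact (hg w hw).1 i
    have heqon := Complex.eqOn_of_isPreconnected_of_isMaxOn_norm hXc.isPreconnected hXo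
      hφd hz hmax
    have hpz : φ p = φ z := heqon hpX
    have hp0 : φ p = 0 := by simp [hφ, hgp0]
    rw [hp0] at hpz
    have hz0 : ‖g z i‖ = 0 := by
      rw [show g z i = φ z from rfl, ← hpz, norm_zero]
    rw [hz0] at heq1
    exact absurd heq1 (by norm_num)
  -- conclude
  have hfdg : fderiv ℂ g p = G p := (hDg p hpX).fderiv
  have hmemL : L ∈ carSet n X p := by
    refine ⟨g, hgdiff, hgmaps, hgp0, ?_⟩
    rw [hfdg]
    exact hdet.symm
  exact le_csSup hbddX hmemL
end
end

section
/- Let X ⊆ ℂⁿ be open and connected, let {Xⱼ} be an increasing sequence of open subsets of X with ∪ⱼ Xⱼ = X, and let p ∈ X₁. Then the sequence K^Δ_{Xⱼ}(p) is non-increasing, each term is ≥ K^Δ_X(p), and lim_{j→∞} K^Δ_{Xⱼ}(p) = K^Δ_X(p). -/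
open Metric Set Filter

noncomputable section

/-- The polydisc-variant Kobayashi–Eisenman volume coefficient
`K^Δ_Y(p) = inf { |det Dg(0)|⁻² : g : Δⁿ → Y holomorphic, g(0) = p, det Dg(0) ≠ 0 }`. -/
def kobPoly (n : ℕ) (Y : Set (EuclideanSpace ℂ (Fin n)))
    (p : EuclideanSpace ℂ (Fin n)) : ℝ :=
  sInf {x : ℝ | ∃ g : EuclideanSpace ℂ (Fin n) → EuclideanSpace ℂ (Fin n),
    DifferentiableOn ℂ g (polydisc n) ∧ MapsTo g (polydisc n) Y ∧ g 0 = p ∧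
    (fderiv ℂ g 0).det ≠ 0 ∧ x = (‖(fderiv ℂ g 0).det‖ ^ 2)⁻¹}

namespace KobAux

/-- The defining set of `kobPoly`. -/
def kset (n : ℕ) (Y : Set (EuclideanSpace ℂ (Fin n)))
    (p : EuclideanSpace ℂ (Fin n)) : Set ℝ :=
  {x : ℝ | ∃ g : EuclideanSpace ℂ (Fin n) → EuclideanSpace ℂ (Fin n),
    DifferentiableOn ℂ g (polydisc n) ∧ MapsTo g (polydisc n) Y ∧ g 0 = p ∧
    (fderiv ℂ g 0).det ≠ 0 ∧ x = (‖(fderiv ℂ g 0).det‖ ^ 2)⁻¹}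

variable {n : ℕ}

lemma kobPoly_eq (Y : Set (EuclideanSpace ℂ (Fin n))) (p : EuclideanSpace ℂ (Fin n)) :
    kobPoly n Y p = sInf (kset n Y p) := rfl

lemma kset_nonneg {Y : Set (EuclideanSpace ℂ (Fin n))} {p : EuclideanSpace ℂ (Fin n)}
    {x : ℝ} (hx : x ∈ kset n Y p) : 0 ≤ x := by
  obtain ⟨g, -, -, -, -, rfl⟩ := hx
  positivity

lemma kset_bddBelow (Y : Set (EuclideanSpace ℂ (Fin n))) (p : EuclideanSpace ℂ (Fin n)) :
    BddBelow (kset n Y p) :=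
  ⟨0, fun _ hx => kset_nonneg hx⟩

lemma kset_mono {Y Y' : Set (EuclideanSpace ℂ (Fin n))} {p : EuclideanSpace ℂ (Fin n)}
    (h : Y ⊆ Y') : kset n Y p ⊆ kset n Y' p := by
  rintro x ⟨g, h1, h2, h3, h4, h5⟩
  exact ⟨g, h1, h2.mono_right h, h3, h4, h5⟩

lemma isOpen_polydisc : IsOpen (polydisc n) := by
  have : polydisc n = ⋂ i, (EuclideanSpace.proj (𝕜 := ℂ) i) ⁻¹' (ball 0 1) := by
    ext z
    simp [polydisc, mem_ball, dist_zero_right]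
  rw [this]
  exact isOpen_iInter_of_finite fun i =>
    isOpen_ball.preimage (EuclideanSpace.proj (𝕜 := ℂ) i).continuous

lemma zero_mem_polydisc : (0 : EuclideanSpace ℂ (Fin n)) ∈ polydisc n := by
  intro i
  simp

lemma norm_le_of_mem_polydisc {z : EuclideanSpace ℂ (Fin n)} (hz : z ∈ polydisc n) :
    ‖z‖ ≤ n + 1 := by
  rw [EuclideanSpace.norm_eq]
  have h1 : (∑ i, ‖z i‖ ^ 2) ≤ (n : ℝ) + 1 := by
    calc (∑ i, ‖z i‖ ^ 2) ≤ ∑ _i : Fin n, (1 : ℝ) := by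
          refine Finset.sum_le_sum fun i _ => ?_
          have := (hz i).le
          nlinarith [norm_nonneg (z i)]
      _ = n := by simp
      _ ≤ (n : ℝ) + 1 := by linarith
  calc Real.sqrt (∑ i, ‖z i‖ ^ 2) ≤ Real.sqrt (((n : ℝ) + 1) ^ 2) := by
        apply Real.sqrt_le_sqrt
        nlinarith [Nat.cast_nonneg (α := ℝ) n]
    _ = (n : ℝ) + 1 := Real.sqrt_sq (by positivity)

lemma det_smul_id (c : ℂ) :
    ((c • ContinuousLinearMap.id ℂ (EuclideanSpace ℂ (Fin n))).det) = c ^ n := by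
  show LinearMap.det _ = _
  rw [ContinuousLinearMap.coe_smul, ContinuousLinearMap.coe_id, LinearMap.det_smul,
    LinearMap.det_id, finrank_euclideanSpace_fin, mul_one]

lemma kset_nonempty {Y : Set (EuclideanSpace ℂ (Fin n))} {p : EuclideanSpace ℂ (Fin n)}
    (hY : IsOpen Y) (hp : p ∈ Y) : (kset n Y p).Nonempty := by
  obtain ⟨ε, hε, hball⟩ := Metric.isOpen_iff.1 hY p hp
  set c : ℝ := ε / (2 * (n + 1)) with hc
  have hc0 : 0 < c := by positivity
  set g : EuclideanSpace ℂ (Fin n) → EuclideanSpace ℂ (Fin n) :=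
    fun z => p + (c : ℂ) • z with hg
  have hfd : fderiv ℂ g 0 = (c : ℂ) • ContinuousLinearMap.id ℂ (EuclideanSpace ℂ (Fin n)) := by
    have : g = fun z => p + ((c : ℂ) • ContinuousLinearMap.id ℂ (EuclideanSpace ℂ (Fin n))) z := rfl
    rw [this, fderiv_const_add, ContinuousLinearMap.fderiv]
  refine ⟨(‖(fderiv ℂ g 0).det‖ ^ 2)⁻¹, g, ?_, ?_, ?_, ?_, rfl⟩
  · intro z _
    exact ((differentiable_id.const_smul (c : ℂ)).const_add p).differentiableAt.differentiableWithinAt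
  · intro z hz
    apply hball
    have hn : ‖(c : ℂ) • z‖ ≤ c * ((n : ℝ) + 1) := by
      rw [norm_smul]
      have h1 : ‖(c : ℂ)‖ = c := by
        simp [abs_of_pos hc0]
      rw [h1]
      exact mul_le_mul_of_nonneg_left (norm_le_of_mem_polydisc hz) hc0.le
    have : c * ((n : ℝ) + 1) < ε := by
      rw [hc]
      rw [div_mul_eq_mul_div, mul_comm]
      rw [div_lt_iff₀ (by positivity)]
      nlinarith [Nat.cast_nonneg (α := ℝ) n]
    have hd : dist (g z) p = ‖(c : ℂ) • z‖ := by
      rw [dist_eq_norm]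
      congr 1
      simp [hg]
    rw [mem_ball, hd]
    exact lt_of_le_of_lt hn this
  · simp [hg]
  · rw [hfd, det_smul_id]
    exact pow_ne_zero _ (by exact_mod_cast hc0.ne')

lemma shrink {X : Set (EuclideanSpace ℂ (Fin n))} (Xs : ℕ → Set (EuclideanSpace ℂ (Fin n)))
    (hmono : Monotone Xs) (hopen : ∀ j, IsOpen (Xs j)) (hunion : ⋃ j, Xs j = X)
    {p : EuclideanSpace ℂ (Fin n)} {x : ℝ} (hx : x ∈ kset n X p)
    {r : ℝ} (hr0 : 0 < r) (hr1 : r < 1) :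
    ∃ j, (r ^ (2 * n))⁻¹ * x ∈ kset n (Xs j) p := by
  obtain ⟨g, hg, hmap, hg0, hdet, rfl⟩ := hx
  set C : Set (EuclideanSpace ℂ (Fin n)) := {z | ∀ i, ‖z i‖ ≤ r} with hC
  have hCco : IsCompact C := by
    have hCeq : C = (⇑(EuclideanSpace.equiv (Fin n) ℂ)) ⁻¹'
        (univ.pi fun _ => closedBall (0 : ℂ) r) := by
      ext z
      simp [hC, mem_closedBall, dist_zero_right]
    rw [hCeq]
    exact ((EuclideanSpace.equiv (Fin n) ℂ).toHomeomorph.isCompact_preimage).2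
      (isCompact_univ_pi fun _ => isCompact_closedBall 0 r)
  have hCsub : C ⊆ polydisc n := fun z hz i => lt_of_le_of_lt (hz i) hr1
  have hKco : IsCompact (g '' C) := hCco.image_of_continuousOn (hg.continuousOn.mono hCsub)
  have hKsub : g '' C ⊆ ⋃ j, Xs j := by
    rw [hunion]
    rintro _ ⟨z, hz, rfl⟩
    exact hmap (hCsub hz)
  obtain ⟨t, ht⟩ := hKco.elim_finite_subcover Xs hopen hKsub
  refine ⟨t.sup id, ?_⟩
  have hKXj : g '' C ⊆ Xs (t.sup id) :=
    ht.trans (iUnion₂_subset fun j hj => hmono (Finset.le_sup (f := id) hj))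
  set gr : EuclideanSpace ℂ (Fin n) → EuclideanSpace ℂ (Fin n) :=
    fun z => g ((r : ℂ) • z) with hgr
  have hmemC : ∀ z ∈ polydisc n, (r : ℂ) • z ∈ C := by
    intro z hz i
    have : ((r : ℂ) • z) i = (r : ℂ) • z i := PiLp.smul_apply _ _ _ _
    rw [this, norm_smul]
    have h1 : ‖(r : ℂ)‖ = r := by simp [abs_of_pos hr0]
    rw [h1]
    calc r * ‖z i‖ ≤ r * 1 := mul_le_mul_of_nonneg_left (hz i).le hr0.le
      _ = r := mul_one r
  have h0p : (0 : EuclideanSpace ℂ (Fin n)) ∈ polydisc n := zero_mem_polydisc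
  have hg0d : DifferentiableAt ℂ g 0 := hg.differentiableAt (isOpen_polydisc.mem_nhds h0p)
  have hfder : fderiv ℂ gr 0 = (fderiv ℂ g 0).comp
      ((r : ℂ) • ContinuousLinearMap.id ℂ (EuclideanSpace ℂ (Fin n))) := by
    have heq : gr = g ∘ ((r : ℂ) • ContinuousLinearMap.id ℂ (EuclideanSpace ℂ (Fin n))) := rfl
    have hinner := ((r : ℂ) • ContinuousLinearMap.id ℂ
      (EuclideanSpace ℂ (Fin n))).differentiableAt (x := 0)
    have hgat : DifferentiableAt ℂ g
        (((r : ℂ) • ContinuousLinearMap.id ℂ (EuclideanSpace ℂ (Fin n))) 0) := by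
      simpa using hg0d
    rw [heq, fderiv_comp 0 hgat hinner, ContinuousLinearMap.fderiv]
    congr 1
    simp
  have hdetgr : (fderiv ℂ gr 0).det = (r : ℂ) ^ n * (fderiv ℂ g 0).det := by
    rw [hfder]
    have hcomp : ((fderiv ℂ g 0).comp
        ((r : ℂ) • ContinuousLinearMap.id ℂ (EuclideanSpace ℂ (Fin n)))).det
        = (fderiv ℂ g 0).det *
          ((r : ℂ) • ContinuousLinearMap.id ℂ (EuclideanSpace ℂ (Fin n))).det := by
      show LinearMap.det _ = LinearMap.det _ * LinearMap.det _
      rw [ContinuousLinearMap.toLinearMap_comp, LinearMap.det_comp]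
    rw [hcomp, det_smul_id, mul_comm]
  refine ⟨gr, ?_, ?_, ?_, ?_, ?_⟩
  · intro z hz
    have hrz : (r : ℂ) • z ∈ polydisc n := hCsub (hmemC z hz)
    have hga : DifferentiableAt ℂ g ((r : ℂ) • z) :=
      hg.differentiableAt (isOpen_polydisc.mem_nhds hrz)
    exact (hga.comp z ((differentiable_id.const_smul ((r : ℂ))).differentiableAt)).differentiableWithinAt
  · intro z hz
    exact hKXj ⟨(r : ℂ) • z, hmemC z hz, rfl⟩
  · simp [hgr, hg0]
  · rw [hdetgr]
    exact mul_ne_zero (pow_ne_zero _ (by exact_mod_cast hr0.ne')) hdet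
  · rw [hdetgr, norm_mul, norm_pow]
    have h1 : ‖(r : ℂ)‖ = r := by simp [abs_of_pos hr0]
    rw [h1, mul_pow, ← pow_mul, mul_inv]
    ring_nf

end KobAux

open KobAux in
theorem stmt_8 (n : ℕ) (X : Set (EuclideanSpace ℂ (Fin n)))
    (hXo : IsOpen X) (hXc : IsConnected X)
    (Xs : ℕ → Set (EuclideanSpace ℂ (Fin n)))
    (hmono : Monotone Xs) (hopen : ∀ j, IsOpen (Xs j))
    (hsub : ∀ j, Xs j ⊆ X) (hunion : ⋃ j, Xs j = X)
    (p : EuclideanSpace ℂ (Fin n)) (hp : p ∈ Xs 0) :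
    (∀ j, kobPoly n (Xs (j + 1)) p ≤ kobPoly n (Xs j) p) ∧
    (∀ j, kobPoly n X p ≤ kobPoly n (Xs j) p) ∧
    Tendsto (fun j => kobPoly n (Xs j) p) atTop (nhds (kobPoly n X p)) := by
  have hpX : p ∈ X := hsub 0 hp
  have hpj : ∀ j, p ∈ Xs j := fun j => hmono (Nat.zero_le j) hp
  have hne : ∀ j, (kset n (Xs j) p).Nonempty := fun j => kset_nonempty (hopen j) (hpj j)
  have hneX : (kset n X p).Nonempty := kset_nonempty hXo hpX
  have hanti : Antitone fun j => kobPoly n (Xs j) p :=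
    antitone_nat_of_succ_le fun j =>
      csInf_le_csInf (kset_bddBelow _ _) (hne j) (kset_mono (hmono (Nat.le_succ j)))
  have hlb : ∀ j, kobPoly n X p ≤ kobPoly n (Xs j) p := fun j =>
    csInf_le_csInf (kset_bddBelow _ _) (hne j) (kset_mono (hsub j))
  refine ⟨fun j => hanti (Nat.le_succ j), hlb, ?_⟩
  have hbdd : BddBelow (range fun j => kobPoly n (Xs j) p) :=
    ⟨kobPoly n X p, by rintro _ ⟨j, rfl⟩; exact hlb j⟩
  have htend := tendsto_atTop_ciInf hanti hbdd
  have hinf : ⨅ j, kobPoly n (Xs j) p = kobPoly n X p := by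
    refine le_antisymm ?_ (le_ciInf hlb)
    refine le_of_forall_pos_le_add fun ε hε => ?_
    have h1 : sInf (kset n X p) < kobPoly n X p + ε / 2 := by
      rw [kobPoly_eq]
      linarith
    obtain ⟨x, hx, hxlt⟩ := exists_lt_of_csInf_lt hneX h1
    have hx0 : 0 < x := by
      obtain ⟨g, -, -, -, hd, rfl⟩ := hx
      have := norm_pos_iff.2 hd
      positivity
    obtain ⟨r, hrmem, hrlt⟩ : ∃ r : ℝ, r ∈ Ioo (0 : ℝ) 1 ∧ x < (x + ε / 2) * r ^ (2 * n) := by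
      have hcl : (1 : ℝ) ∈ closure (Ioo (0 : ℝ) 1) := by
        rw [closure_Ioo (by norm_num : (0 : ℝ) ≠ 1)]
        exact ⟨by norm_num, le_refl 1⟩
      haveI hne' := mem_closure_iff_nhdsWithin_neBot.1 hcl
      have hcont : Tendsto (fun r : ℝ => (x + ε / 2) * r ^ (2 * n))
          (nhdsWithin 1 (Ioo (0 : ℝ) 1)) (nhds (x + ε / 2)) := by
        have hc : ContinuousAt (fun r : ℝ => (x + ε / 2) * r ^ (2 * n)) 1 := by fun_prop
        have := hc.tendsto.mono_left (nhdsWithin_le_nhds (s := Ioo (0 : ℝ) 1))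
        simpa using this
      have hev : ∀ᶠ r in nhdsWithin 1 (Ioo (0 : ℝ) 1),
          x < (x + ε / 2) * r ^ (2 * n) :=
        hcont.eventually (eventually_gt_nhds (by linarith))
      obtain ⟨r, hr1, hr2⟩ := (eventually_mem_nhdsWithin.and hev).exists
      exact ⟨r, hr1, hr2⟩
    obtain ⟨j, hj⟩ := shrink Xs hmono hopen hunion hx hrmem.1 hrmem.2
    have hle : kobPoly n (Xs j) p ≤ (r ^ (2 * n))⁻¹ * x :=
      csInf_le (kset_bddBelow _ _) hj
    have hpow : (0 : ℝ) < r ^ (2 * n) := pow_pos hrmem.1 _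
    have h3 : (r ^ (2 * n))⁻¹ * x < x + ε / 2 := by
      rw [inv_mul_lt_iff₀ hpow]
      nlinarith
    have h4 : (⨅ j, kobPoly n (Xs j) p) ≤ kobPoly n (Xs j) p := ciInf_le hbdd j
    linarith
  rwa [hinf] at htend
end
end

section
/- Let X ⊆ ℂⁿ be open and connected, let {Xⱼ} be an increasing sequence of open subsets of X with ∪ⱼ Xⱼ = X, and let p ∈ X₁. Then the sequence K^B_{Xⱼ}(p) is non-increasing, each term is ≥ K^B_X(p), and lim_{j→∞} K^B_{Xⱼ}(p) = K^B_X(p). -/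
open Metric Set Filter

noncomputable section

/-- The ball-variant Kobayashi–Eisenman volume coefficient
`K^B_Y(p) = inf { |det Dg(0)|⁻² : g : 𝔹ⁿ → Y holomorphic, g(0) = p, det Dg(0) ≠ 0 }`. -/
def kobBall (n : ℕ) (Y : Set (EuclideanSpace ℂ (Fin n)))
    (p : EuclideanSpace ℂ (Fin n)) : ℝ :=
  sInf {x : ℝ | ∃ g : EuclideanSpace ℂ (Fin n) → EuclideanSpace ℂ (Fin n),
    DifferentiableOn ℂ g (ball (0 : EuclideanSpace ℂ (Fin n)) 1) ∧
    MapsTo g (ball (0 : EuclideanSpace ℂ (Fin n)) 1) Y ∧ g 0 = p ∧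
    (fderiv ℂ g 0).det ≠ 0 ∧ x = (‖(fderiv ℂ g 0).det‖ ^ 2)⁻¹}

abbrev Ecx (n : ℕ) := EuclideanSpace ℂ (Fin n)

/-- The defining set of `kobBall`. -/
def kobSet (n : ℕ) (Y : Set (Ecx n)) (p : Ecx n) : Set ℝ :=
  {x : ℝ | ∃ g : Ecx n → Ecx n,
    DifferentiableOn ℂ g (ball (0 : Ecx n) 1) ∧
    MapsTo g (ball (0 : Ecx n) 1) Y ∧ g 0 = p ∧
    (fderiv ℂ g 0).det ≠ 0 ∧ x = (‖(fderiv ℂ g 0).det‖ ^ 2)⁻¹}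

lemma kobBall_eq_sInf (n : ℕ) (Y : Set (Ecx n)) (p : Ecx n) :
    kobBall n Y p = sInf (kobSet n Y p) := rfl

lemma kobSet_nonneg {n Y p} : ∀ x ∈ kobSet n Y p, (0:ℝ) ≤ x := by
  rintro x ⟨g, _, _, _, _, rfl⟩; positivity

lemma bddBelow_kobSet {n Y p} : BddBelow (kobSet n Y p) :=
  ⟨0, kobSet_nonneg⟩

lemma kobSet_mono {n : ℕ} {Y Z : Set (Ecx n)} {p} (h : Y ⊆ Z) :
    kobSet n Y p ⊆ kobSet n Z p := by
  rintro x ⟨g, hg, hm, h0, hd, rfl⟩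
  exact ⟨g, hg, hm.mono_right h, h0, hd, rfl⟩

lemma hasFDerivAt_smul_zero {n : ℕ} (c : ℂ) :
    HasFDerivAt (fun z : Ecx n => c • z) (c • ContinuousLinearMap.id ℂ (Ecx n)) 0 :=
  (hasFDerivAt_id (0 : Ecx n)).const_smul c

lemma det_smul_id {n : ℕ} (c : ℂ) :
    (c • ContinuousLinearMap.id ℂ (Ecx n)).det = c ^ n := by
  rw [ContinuousLinearMap.det, ContinuousLinearMap.coe_smul, ContinuousLinearMap.coe_id,
    LinearMap.det_smul, LinearMap.det_id, finrank_euclideanSpace_fin, mul_one]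

lemma kobSet_nonempty {n : ℕ} {Y : Set (Ecx n)} {p : Ecx n} (hY : IsOpen Y) (hp : p ∈ Y) :
    (kobSet n Y p).Nonempty := by
  obtain ⟨δ, hδ, hball⟩ := Metric.isOpen_iff.1 hY p hp
  set g : Ecx n → Ecx n := fun z => p + (δ:ℂ) • z with hg
  have hder : fderiv ℂ g 0 = (δ:ℂ) • ContinuousLinearMap.id ℂ (Ecx n) :=
    (((hasFDerivAt_smul_zero (n := n) (δ:ℂ)).const_add p)).fderiv
  have hdet : (fderiv ℂ g 0).det = (δ:ℂ) ^ n := by rw [hder, det_smul_id]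
  refine ⟨(‖(fderiv ℂ g 0).det‖ ^ 2)⁻¹, g, ?_, ?_, ?_, ?_, rfl⟩
  · exact (((differentiable_id.const_smul ((δ:ℂ))).const_add p)).differentiableOn
  · intro z hz
    apply hball
    simp only [mem_ball, dist_eq_norm, sub_zero] at hz ⊢
    have : p + (δ:ℂ) • z - p = (δ:ℂ) • z := by abel
    rw [this, norm_smul, Complex.norm_real, Real.norm_eq_abs, abs_of_pos hδ]
    calc δ * ‖z‖ < δ * 1 := by nlinarith
    _ = δ := mul_one δ
  · simp [hg]
  · rw [hdet]
    exact pow_ne_zero _ (by exact_mod_cast ne_of_gt hδ)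

lemma kobSet_scale {n : ℕ} {Y : Set (Ecx n)} {p : Ecx n} {g : Ecx n → Ecx n}
    (hg : DifferentiableOn ℂ g (ball (0 : Ecx n) 1)) (r : ℝ) (hr0 : 0 < r) (hr1 : r < 1)
    (him : g '' closedBall (0:Ecx n) r ⊆ Y) (h0 : g 0 = p)
    (hd : (fderiv ℂ g 0).det ≠ 0) :
    ((‖(fderiv ℂ g 0).det‖ ^ 2 * r ^ (2*n))⁻¹) ∈ kobSet n Y p := by
  have hsub : closedBall (0:Ecx n) r ⊆ ball (0:Ecx n) 1 := closedBall_subset_ball hr1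
  have hmem : ∀ z ∈ ball (0:Ecx n) 1, (r:ℂ) • z ∈ closedBall (0:Ecx n) r := by
    intro z hz
    simp only [mem_ball, mem_closedBall, dist_zero_right] at hz ⊢
    rw [norm_smul, Complex.norm_real, Real.norm_eq_abs, abs_of_pos hr0]
    nlinarith
  set h : Ecx n → Ecx n := fun z => g ((r:ℂ) • z) with hh
  have h0mem : (0:Ecx n) ∈ ball (0:Ecx n) 1 := by simp
  have hgd : HasFDerivAt g (fderiv ℂ g 0) 0 :=
    (hg.differentiableAt (isOpen_ball.mem_nhds h0mem)).hasFDerivAt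
  have hgd' : HasFDerivAt g (fderiv ℂ g 0) ((r:ℂ) • (0:Ecx n)) := by rwa [smul_zero]
  have hcomp : HasFDerivAt h ((fderiv ℂ g 0).comp ((r:ℂ) • ContinuousLinearMap.id ℂ (Ecx n))) 0 :=
    hgd'.comp 0 (hasFDerivAt_smul_zero (r:ℂ))
  have hderh : fderiv ℂ h 0 = (fderiv ℂ g 0).comp ((r:ℂ) • ContinuousLinearMap.id ℂ (Ecx n)) :=
    hcomp.fderiv
  have hdeth : (fderiv ℂ h 0).det = (fderiv ℂ g 0).det * (r:ℂ) ^ n := by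
    rw [hderh, ContinuousLinearMap.det, ContinuousLinearMap.toLinearMap_comp, LinearMap.det_comp]
    congr 1
    exact det_smul_id (r:ℂ)
  refine ⟨h, ?_, ?_, ?_, ?_, ?_⟩
  · exact hg.comp ((differentiable_id.const_smul ((r:ℂ))).differentiableOn)
      (fun z hz => hsub (hmem z hz))
  · intro z hz
    exact him ⟨(r:ℂ) • z, hmem z hz, rfl⟩
  · simp [hh, h0]
  · rw [hdeth]
    exact mul_ne_zero hd (pow_ne_zero _ (by exact_mod_cast ne_of_gt hr0))
  · rw [hdeth, norm_mul, norm_pow, Complex.norm_real, Real.norm_eq_abs, abs_of_pos hr0,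
      mul_pow, ← pow_mul]
    ring_nf

theorem stmt_10 (n : ℕ) (X : Set (EuclideanSpace ℂ (Fin n)))
    (hXo : IsOpen X) (hXc : IsConnected X)
    (Xs : ℕ → Set (EuclideanSpace ℂ (Fin n)))
    (hmono : Monotone Xs) (hopen : ∀ j, IsOpen (Xs j))
    (hsub : ∀ j, Xs j ⊆ X) (hunion : ⋃ j, Xs j = X)
    (p : EuclideanSpace ℂ (Fin n)) (hp : p ∈ Xs 0) :
    (∀ j, kobBall n (Xs (j + 1)) p ≤ kobBall n (Xs j) p) ∧
    (∀ j, kobBall n X p ≤ kobBall n (Xs j) p) ∧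
    Tendsto (fun j => kobBall n (Xs j) p) atTop (nhds (kobBall n X p)) := by
  have hpj : ∀ j, p ∈ Xs j := fun j => hmono (Nat.zero_le j) hp
  have hne : ∀ j, (kobSet n (Xs j) p).Nonempty := fun j => kobSet_nonempty (hopen j) (hpj j)
  have hpX : p ∈ X := hsub 0 hp
  have hneX : (kobSet n X p).Nonempty := kobSet_nonempty hXo hpX
  have part1 : ∀ j, kobBall n (Xs (j + 1)) p ≤ kobBall n (Xs j) p := fun j =>
    csInf_le_csInf bddBelow_kobSet (hne j) (kobSet_mono (hmono (Nat.le_succ j)))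
  have part2 : ∀ j, kobBall n X p ≤ kobBall n (Xs j) p := fun j =>
    csInf_le_csInf bddBelow_kobSet (hne j) (kobSet_mono (hsub j))
  refine ⟨part1, part2, ?_⟩
  set K := kobBall n X p with hK
  rw [Metric.tendsto_atTop]
  intro ε hε
  have hK0 : 0 ≤ K := le_csInf hneX kobSet_nonneg
  have hKε0 : 0 < K + ε := by linarith
  obtain ⟨v, hvmem, hvlt⟩ := exists_lt_of_csInf_lt hneX (lt_add_of_pos_right K hε)
  obtain ⟨g, hg, hmX, h0, hd, rfl⟩ := hvmem
  set d := (fderiv ℂ g 0).det with hdd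
  have hdpos : 0 < ‖d‖ := norm_pos_iff.2 hd
  have hvpos : 0 < (‖d‖ ^ 2)⁻¹ := by positivity
  set c := (‖d‖ ^ 2)⁻¹ / (K + ε) with hc
  have hc0 : 0 < c := div_pos hvpos hKε0
  have hc1 : c < 1 := (div_lt_one hKε0).2 hvlt
  obtain ⟨s, hcs, hs1⟩ := exists_between hc1
  have hs0 : 0 < s := hc0.trans hcs
  set r := s ^ ((2*(n:ℝ)+1))⁻¹ with hr
  have hr0 : 0 < r := Real.rpow_pos_of_pos hs0 _
  have hr1 : r < 1 := Real.rpow_lt_one hs0.le hs1 (by positivity)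
  have hrpow : s ≤ r ^ (2*n) := by
    have h1 : r ^ (2*n) = s ^ (((2*(n:ℝ)+1))⁻¹ * ((2*n : ℕ) : ℝ)) := by
      rw [hr, ← Real.rpow_natCast (s ^ ((2*(n:ℝ)+1))⁻¹) (2*n), ← Real.rpow_mul hs0.le]
    rw [h1]
    calc s = s ^ (1:ℝ) := (Real.rpow_one s).symm
    _ ≤ s ^ (((2*(n:ℝ)+1))⁻¹ * ((2*n : ℕ) : ℝ)) := by
        apply Real.rpow_le_rpow_of_exponent_ge hs0 hs1.le
        rw [← div_eq_inv_mul]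
        apply div_le_one_of_le₀ <;> push_cast <;> [linarith; positivity]
  have hrpow0 : 0 < r ^ (2*n) := pow_pos hr0 _
  have hlt1 : (‖d‖ ^ 2)⁻¹ < (K + ε) * r ^ (2*n) := by
    have := (div_lt_iff₀ hKε0).1 (hcs.trans_le hrpow)
    nlinarith
  have hvlt2 : (‖d‖ ^ 2 * r ^ (2*n))⁻¹ < K + ε := by
    rw [mul_inv, ← div_eq_mul_inv]
    exact (div_lt_iff₀ hrpow0).2 hlt1
  -- find an index containing the compact image
  have hKc : IsCompact (g '' closedBall (0:Ecx n) r) :=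
    (isCompact_closedBall _ _).image_of_continuousOn
      (hg.continuousOn.mono (closedBall_subset_ball hr1))
  have hKcX : g '' closedBall (0:Ecx n) r ⊆ ⋃ i, Xs i := by
    rw [hunion]
    rintro _ ⟨z, hz, rfl⟩
    exact hmX (closedBall_subset_ball hr1 hz)
  obtain ⟨j, hj⟩ := hKc.elim_directed_cover Xs hopen hKcX hmono.directed_le
  refine ⟨j, fun j' hj' => ?_⟩
  have hmem := kobSet_scale hg r hr0 hr1 (hj.trans (hmono hj')) h0 hd
  have hle : kobBall n (Xs j') p ≤ (‖d‖ ^ 2 * r ^ (2*n))⁻¹ :=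
    csInf_le bddBelow_kobSet hmem
  have hge : K ≤ kobBall n (Xs j') p := part2 j'
  rw [Real.dist_eq, abs_lt]
  constructor <;> nlinarith [hle.trans_lt hvlt2]
end
end

section
/- Let Ω ⊂ ℂⁿ be a bounded convex open set such that every holomorphic map f : Δ → ℂⁿ with f(Δ) ⊆ ∂Ω is constant. Let U ⊆ ℂᵐ be open and connected, z⁰ ∈ U, and let hⱼ : U → Ω be holomorphic maps with hⱼ(z⁰) → p⁰ for some p⁰ ∈ ∂Ω. Then hⱼ converges to the constant map p⁰ uniformly on compact subsets of U, and the derivatives Dhⱼ converge to 0 uniformly on compact subsets of U; in particular the operator norms ‖Dhⱼ(z⁰)‖ tend to 0 as j → ∞. -/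
open Metric Set Filter

noncomputable section

open scoped UniformConvergence

section Aux

variable {Em En : Type*} [NormedAddCommGroup Em] [NormedSpace ℂ Em]
  [NormedAddCommGroup En] [NormedSpace ℂ En]

/-- Uniform local Lipschitz bound for holomorphic functions bounded by `M`, via the Schwarz
lemma applied on complex lines. -/
lemma aux_lipschitz {U : Set Em} {f : Em → En} {M ρ : ℝ} (hρ : 0 < ρ)
    (hf : DifferentiableOn ℂ f U) (hb : ∀ w ∈ U, ‖f w‖ ≤ M)
    {x : Em} (hx : ball x (3 * ρ) ⊆ U) {y : Em} (hy : y ∈ ball x ρ) :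
    dist (f y) (f x) ≤ (2 * M + 1) / (2 * ρ) * dist y x := by
  rcases eq_or_ne y x with rfl | hne
  · simp
  have hd : (0 : ℝ) < dist y x := dist_pos.2 hne
  set d : ℝ := dist y x with hd_def
  set e : ℂ → Em := fun t => x + (t * (d : ℂ)⁻¹) • (y - x) with he_def
  have hnorm : ∀ t : ℂ, ‖(t * (d : ℂ)⁻¹) • (y - x)‖ = ‖t‖ := by
    intro t
    rw [norm_smul, norm_mul, norm_inv]
    have h1 : ‖(d : ℂ)‖ = d := by
      simp [Complex.norm_real, abs_of_pos hd]
    have h2 : ‖y - x‖ = d := by rw [← dist_eq_norm]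
    rw [h1, h2]
    field_simp
  have hmapse : ∀ t ∈ ball (0 : ℂ) (2 * ρ), e t ∈ U := by
    intro t ht
    apply hx
    simp only [mem_ball, dist_eq_norm, he_def] at ht ⊢
    rw [add_sub_cancel_left, hnorm]
    calc ‖t‖ < 2 * ρ := by simpa using ht
    _ < 3 * ρ := by nlinarith
  have hde : Differentiable ℂ e := by
    apply (differentiable_const x).add
    exact (differentiable_id.mul_const _).smul_const _
  have hsl : DifferentiableOn ℂ (f ∘ e) (ball (0 : ℂ) (2 * ρ)) :=
    hf.comp hde.differentiableOn hmapse
  have hmaps : MapsTo (f ∘ e) (ball (0 : ℂ) (2 * ρ)) (ball ((f ∘ e) 0) (2 * M + 1)) := by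
    intro t ht
    have h1 : ‖f (e t)‖ ≤ M := hb _ (hmapse t ht)
    have h2 : ‖f (e 0)‖ ≤ M := hb _ (hmapse 0 (by simpa using mul_pos two_pos hρ))
    simp only [mem_ball, Function.comp_apply]
    calc dist (f (e t)) (f (e 0)) ≤ ‖f (e t)‖ + ‖f (e 0)‖ := dist_le_norm_add_norm _ _
    _ ≤ M + M := add_le_add h1 h2
    _ < 2 * M + 1 := by nlinarith
  have hdmem : (d : ℂ) ∈ ball (0 : ℂ) (2 * ρ) := by
    simp only [mem_ball, dist_zero_right, Complex.norm_real, Real.norm_eq_abs, abs_of_pos hd]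
    calc d < ρ := by simpa [hd_def] using hy
    _ < 2 * ρ := by nlinarith
  have := Complex.dist_le_div_mul_dist_of_mapsTo_ball hsl (hmaps.mono_right ball_subset_closedBall) hdmem
  have he0 : e 0 = x := by simp [he_def]
  have hed : e (d : ℂ) = y := by
    simp only [he_def]
    rw [mul_inv_cancel₀ (by exact_mod_cast hd.ne')]
    simp
  have hdd : dist ((d : ℂ)) 0 = d := by
    simp [Complex.dist_eq, abs_of_pos hd]
  rw [Function.comp_apply, Function.comp_apply, he0, hed, hdd] at this
  exact this

end Aux

set_option maxHeartbeats 2000000 in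
theorem stmt_11 (n m : ℕ)
    (Ω : Set (EuclideanSpace ℂ (Fin n)))
    (hΩo : IsOpen Ω) (hΩb : Bornology.IsBounded Ω) (hΩconv : Convex ℝ Ω)
    (hnodisc : ∀ f : ℂ → EuclideanSpace ℂ (Fin n),
      DifferentiableOn ℂ f (ball (0 : ℂ) 1) →
      f '' ball (0 : ℂ) 1 ⊆ frontier Ω →
      ∃ c, ∀ t ∈ ball (0 : ℂ) 1, f t = c)
    (U : Set (EuclideanSpace ℂ (Fin m))) (hUo : IsOpen U) (hUc : IsConnected U)
    (z0 : EuclideanSpace ℂ (Fin m)) (hz0 : z0 ∈ U)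
    (h : ℕ → EuclideanSpace ℂ (Fin m) → EuclideanSpace ℂ (Fin n))
    (hdiff : ∀ j, DifferentiableOn ℂ (h j) U)
    (hmaps : ∀ j, MapsTo (h j) U Ω)
    (p0 : EuclideanSpace ℂ (Fin n)) (hp0 : p0 ∈ frontier Ω)
    (hconv : Tendsto (fun j => h j z0) atTop (nhds p0)) :
    (∀ K ⊆ U, IsCompact K →
      TendstoUniformlyOn h (fun _ => p0) atTop K) ∧
    (∀ K ⊆ U, IsCompact K →
      TendstoUniformlyOn (fun j z => fderiv ℂ (h j) z)
        (fun _ => (0 : EuclideanSpace ℂ (Fin m) →L[ℂ] EuclideanSpace ℂ (Fin n)))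
        atTop K) ∧
    Tendsto (fun j => ‖fderiv ℂ (h j) z0‖) atTop (nhds 0) := by
  classical
  -- bound on Ω
  obtain ⟨M, hM⟩ := hΩb.subset_closedBall 0
  have hMb : ∀ j, ∀ w ∈ U, ‖h j w‖ ≤ M := by
    intro j w hw
    have := hM (hmaps j hw)
    simpa [mem_closedBall, dist_zero_right] using this
  -- supporting functional
  have hp0notΩ : p0 ∉ Ω := by
    rw [hΩo.frontier_eq] at hp0; exact hp0.2
  have hp0cl : p0 ∈ closure Ω := by
    rw [hΩo.frontier_eq] at hp0; exact hp0.1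
  obtain ⟨fr, hfr⟩ := geometric_hahn_banach_open_point hΩconv hΩo hp0notΩ
  set L : EuclideanSpace ℂ (Fin n) →L[ℂ] ℂ := fr.extendTo𝕜' with hL_def
  have hLre : ∀ x, (L x).re = fr x := by
    intro x
    have h1 := LinearMap.extendTo𝕜'_apply_re (𝕜 := ℂ) fr.toLinearMap x
    exact h1
  set c : ℝ := fr p0 with hc_def
  have hΩlt : ∀ x ∈ Ω, (L x).re < c := fun x hx => by rw [hLre]; exact hfr x hx
  have hclos : ∀ x ∈ closure Ω, (L x).re ≤ c := by
    intro x hx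
    have hsub : closure Ω ⊆ {y | fr y ≤ c} :=
      closure_minimal (fun y hy => (hfr y hy).le)
        (isClosed_le fr.continuous continuous_const)
    rw [hLre]; exact hsub hx
  -- the collection of compacts of U
  set 𝔖 : Set (Set (EuclideanSpace ℂ (Fin m))) := {K | K ⊆ U ∧ IsCompact K} with h𝔖_def
  set H' : ℕ → (EuclideanSpace ℂ (Fin m) →ᵤ[𝔖] EuclideanSpace ℂ (Fin n)) :=
    fun j => UniformOnFun.ofFun 𝔖 (h j) with hH'_def
  -- equicontinuity
  have hequi : ∀ K ∈ 𝔖, EquicontinuousOn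
      (UniformOnFun.toFun 𝔖 ∘ ((↑) : ↥(range H') →
        (EuclideanSpace ℂ (Fin m) →ᵤ[𝔖] EuclideanSpace ℂ (Fin n)))) K := by
    intro K hK x hxK
    obtain ⟨ρ3, hρ3, hballU⟩ := Metric.isOpen_iff.mp hUo x (hK.1 hxK)
    set ρ : ℝ := ρ3 / 3 with hρ_def
    have hρ : 0 < ρ := by positivity
    have hball3 : ball x (3 * ρ) ⊆ U := by
      refine Subset.trans ?_ hballU
      apply ball_subset_ball
      rw [hρ_def]; linarith
    set C : ℝ := (2 * M + 1) / (2 * ρ) with hC_def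
    have hMpos : 0 ≤ M := by
      have := hMb 0 z0 hz0
      exact le_trans (norm_nonneg _) this
    have hCpos : 0 < C := by
      rw [hC_def]; positivity
    intro V hV
    obtain ⟨ε, hε, hεV⟩ := Metric.mem_uniformity_dist.mp hV
    have hδpos : 0 < min ρ (ε / (2 * C)) := lt_min hρ (by positivity)
    have hmem : ball x (min ρ (ε / (2 * C))) ∈ nhdsWithin x K :=
      mem_nhdsWithin_of_mem_nhds (ball_mem_nhds x hδpos)
    filter_upwards [hmem] with y hy
    rintro ⟨ψ, j, rfl⟩
    have hyρ : y ∈ ball x ρ := ball_subset_ball (min_le_left _ _) hy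
    have hlip := aux_lipschitz hρ (hdiff j) (hMb j) hball3 hyρ
    apply hεV
    have hdy : dist y x < ε / (2 * C) :=
      lt_of_lt_of_le (by simpa [mem_ball] using hy) (min_le_right _ _)
    calc dist (h j x) (h j y) = dist (h j y) (h j x) := dist_comm _ _
    _ ≤ C * dist y x := hlip
    _ < C * (ε / (2 * C)) := by
        apply mul_lt_mul_of_pos_left _ hCpos
        exact hdy
    _ = ε / 2 := by field_simp [hCpos.ne']
    _ < ε := by linarith
  -- compactness of the closure of the family
  have hScomp : IsCompact (closure (range H')) := by
    apply ArzelaAscoli.isCompact_closure_of_isClosedEmbedding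
      (fun K hK => hK.2) (F := UniformOnFun.toFun 𝔖)
      (show Topology.IsClosedEmbedding
        (UniformOnFun.ofFun 𝔖 ∘ UniformOnFun.toFun 𝔖) from Topology.IsClosedEmbedding.id)
      hequi
    intro K hK x hx
    refine ⟨closedBall 0 M, isCompact_closedBall _ _, ?_⟩
    rintro ψ ⟨j, rfl⟩
    exact hM (hmaps j (hK.1 hx))
  -- cluster point analysis
  have cluster : ∀ g : EuclideanSpace ℂ (Fin m) →ᵤ[𝔖] EuclideanSpace ℂ (Fin n),
      ClusterPt g (map H' atTop) → ∀ z ∈ U, UniformOnFun.toFun 𝔖 g z = p0 := by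
    intro g hg
    set F' : Filter (EuclideanSpace ℂ (Fin m) →ᵤ[𝔖] EuclideanSpace ℂ (Fin n)) :=
      nhds g ⊓ map H' atTop with hF'_def
    haveI hF'ne : F'.NeBot := hg
    have hidt : Tendsto id F' (nhds g) := tendsto_id'.mpr inf_le_left
    have huc : ∀ K ∈ 𝔖, TendstoUniformlyOn
        (fun ψ => UniformOnFun.toFun 𝔖 ψ) (UniformOnFun.toFun 𝔖 g) F' K :=
      fun K hK => UniformOnFun.tendsto_iff_tendstoUniformlyOn.mp hidt K hK
    have hev : ∀ᶠ ψ in F', ∃ j, ψ = H' j := by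
      have hmem : ∀ᶠ ψ in map H' atTop, ∃ j, ψ = H' j := by
        rw [eventually_map]
        filter_upwards with j
        exact ⟨j, rfl⟩
      exact hmem.filter_mono inf_le_right
    have hpt : ∀ z ∈ U, Tendsto (fun ψ => UniformOnFun.toFun 𝔖 ψ z) F'
        (nhds (UniformOnFun.toFun 𝔖 g z)) := by
      intro z hz
      have h1 := huc {z} ⟨singleton_subset_iff.mpr hz, isCompact_singleton⟩
      exact tendstoUniformlyOn_singleton_iff_tendsto.mp h1
    have hclΩ : ∀ z ∈ U, UniformOnFun.toFun 𝔖 g z ∈ closure Ω := by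
      intro z hz
      refine mem_closure_of_tendsto (hpt z hz) ?_
      filter_upwards [hev] with ψ hψ
      obtain ⟨j, rfl⟩ := hψ
      exact hmaps j hz
    have hgz0 : UniformOnFun.toFun 𝔖 g z0 = p0 := by
      have h2 : Tendsto (fun ψ => UniformOnFun.toFun 𝔖 ψ z0) F' (nhds p0) := by
        have h3 : Tendsto (fun ψ => UniformOnFun.toFun 𝔖 ψ z0) (map H' atTop) (nhds p0) := by
          rw [tendsto_map'_iff]
          exact hconv
        exact h3.mono_left inf_le_right
      exact tendsto_nhds_unique (hpt z0 hz0) h2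
    have hgc : ∀ z ∈ U, ContinuousAt (UniformOnFun.toFun 𝔖 g) z := by
      intro z hz
      obtain ⟨r, hr, hball⟩ := Metric.isOpen_iff.mp hUo z hz
      have hKc : IsCompact (closedBall z (r/2)) := isCompact_closedBall _ _
      have hKU : closedBall z (r/2) ⊆ U := fun y hy =>
        hball (lt_of_le_of_lt (mem_closedBall.mp hy) (by linarith))
      have hco : ContinuousOn (UniformOnFun.toFun 𝔖 g) (closedBall z (r/2)) := by
        refine (huc _ ⟨hKU, hKc⟩).continuousOn (Filter.Eventually.frequently ?_)
        filter_upwards [hev] with ψ hψ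
        obtain ⟨j, rfl⟩ := hψ
        exact ((hdiff j).continuousOn).mono hKU
      exact hco.continuousAt (closedBall_mem_nhds z (by positivity))
    -- local propagation of the value p0
    have hAloc : ∀ z ∈ U, UniformOnFun.toFun 𝔖 g z = p0 →
        ∃ r > 0, ball z r ⊆ U ∧ ∀ w ∈ ball z (r/2), UniformOnFun.toFun 𝔖 g w = p0 := by
      intro z hzU hzp
      obtain ⟨r, hr, hball⟩ := Metric.isOpen_iff.mp hUo z hzU
      refine ⟨r, hr, hball, ?_⟩
      intro w hw
      rcases eq_or_ne w z with rfl | hwz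
      · exact hzp
      set v : EuclideanSpace ℂ (Fin m) := w - z with hv_def
      have hvn : ‖v‖ < r/2 := by
        rw [hv_def, ← dist_eq_norm]
        simpa [mem_ball] using hw
      set e : ℂ → EuclideanSpace ℂ (Fin m) := fun t => z + (2*t) • v with he_def
      have hballe : ∀ t ∈ ball (0:ℂ) 1, e t ∈ ball z r := by
        intro t ht
        simp only [he_def, mem_ball, dist_eq_norm, add_sub_cancel_left]
        rw [norm_smul]
        calc ‖(2*t : ℂ)‖ * ‖v‖ ≤ 2 * ‖v‖ := by
              apply mul_le_mul_of_nonneg_right _ (norm_nonneg v)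
              rw [norm_mul]
              have := (mem_ball_zero_iff.mp ht).le
              simp only [Complex.norm_ofNat]
              nlinarith [norm_nonneg t]
        _ < r := by linarith
      have heU : ∀ t ∈ ball (0:ℂ) 1, e t ∈ U := fun t ht => hball (hballe t ht)
      have hde : Differentiable ℂ e := by
        apply (differentiable_const z).add
        exact ((differentiable_id.const_mul (2:ℂ))).smul_const v
      set φ : ℂ → EuclideanSpace ℂ (Fin n) := fun t => UniformOnFun.toFun 𝔖 g (e t)
        with hφ_def
      have hφdiff : DifferentiableOn ℂ φ (ball (0:ℂ) 1) := by
        apply TendstoLocallyUniformlyOn.differentiableOn (φ := F')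
          (F := fun ψ t => UniformOnFun.toFun 𝔖 ψ (e t))
        · rw [tendstoLocallyUniformlyOn_iff_forall_isCompact isOpen_ball]
          intro Q hQb hQc
          have hQ' : IsCompact (e '' Q) := hQc.image hde.continuous
          have hQ'U : e '' Q ⊆ U := by
            rintro _ ⟨t, ht, rfl⟩
            exact heU t (hQb ht)
          have h4 := (huc (e '' Q) ⟨hQ'U, hQ'⟩).comp e
          exact h4.mono (subset_preimage_image e Q)
        · filter_upwards [hev] with ψ hψ
          obtain ⟨j, rfl⟩ := hψ
          exact (hdiff j).comp hde.differentiableOn (fun t ht => heU t ht)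
        · exact isOpen_ball
      have hφcl : ∀ t ∈ ball (0:ℂ) 1, φ t ∈ closure Ω := fun t ht => hclΩ _ (heU t ht)
      have hφ0 : φ 0 = p0 := by
        simp only [hφ_def, he_def]
        rw [show ((2:ℂ)*(0:ℂ)) = 0 by ring, zero_smul, add_zero]
        exact hzp
      have hfront : ∀ t ∈ ball (0:ℂ) 1, φ t ∈ frontier Ω := by
        set u : ℂ → ℂ := fun t => Complex.exp (L (φ t)) with hu_def
        have hud : DifferentiableOn ℂ u (ball (0:ℂ) 1) :=
          Complex.differentiable_exp.comp_differentiableOn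
            (L.differentiable.comp_differentiableOn hφdiff)
        have hnorme : ∀ t, ‖u t‖ = Real.exp ((L (φ t)).re) := by
          intro t
          rw [hu_def]
          simp [Complex.norm_exp]
        have hmax : IsMaxOn (norm ∘ u) (ball (0:ℂ) 1) 0 := by
          intro t ht
          show ‖u t‖ ≤ ‖u 0‖
          rw [hnorme, hnorme, hφ0]
          apply Real.exp_le_exp.mpr
          have h1 := hclos _ (hφcl t ht)
          rw [hc_def] at h1
          rw [← hLre] at h1
          exact h1
        have heq := Complex.eqOn_of_isPreconnected_of_isMaxOn_norm
          (convex_ball (0:ℂ) 1).isPreconnected isOpen_ball hud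
          (mem_ball_self one_pos) hmax
        intro t ht
        have h3 : u t = u 0 := heq ht
        have h4 : (L (φ t)).re = c := by
          have h5 := congrArg norm h3
          rw [hnorme, hnorme, hφ0] at h5
          rw [hc_def, ← hLre]
          exact Real.exp_injective h5
        rw [hΩo.frontier_eq]
        exact ⟨hφcl t ht, fun hin => (hΩlt _ hin).ne h4⟩
      obtain ⟨cst, hcst⟩ := hnodisc φ hφdiff (by
        rintro _ ⟨t, ht, rfl⟩
        exact hfront t ht)
      have hhalf : ((1/2 : ℝ) : ℂ) ∈ ball (0:ℂ) 1 := by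
        rw [mem_ball_zero_iff, Complex.norm_real]
        norm_num
      have h5 : φ ((1/2 : ℝ) : ℂ) = UniformOnFun.toFun 𝔖 g w := by
        simp only [hφ_def, he_def]
        rw [show ((2:ℂ) * ((1/2:ℝ):ℂ)) = 1 by push_cast; ring, one_smul, hv_def,
          add_sub_cancel]
      have h6 : φ ((1/2:ℝ):ℂ) = cst := hcst _ hhalf
      have h7 : φ 0 = cst := hcst 0 (mem_ball_self one_pos)
      rw [← h5, h6, ← h7, hφ0]
    -- connectedness argument
    intro z hzU
    by_contra hnep
    have hBopen : IsOpen {y | y ∈ U ∧ UniformOnFun.toFun 𝔖 g y ≠ p0} := by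
      rw [isOpen_iff_mem_nhds]
      rintro y ⟨hyU, hyne⟩
      have h1 : {x | UniformOnFun.toFun 𝔖 g x ≠ p0} ∈ nhds y :=
        (hgc y hyU).preimage_mem_nhds (compl_singleton_mem_nhds hyne)
      filter_upwards [inter_mem (hUo.mem_nhds hyU) h1] with x hx
      exact ⟨hx.1, hx.2⟩
    have hAopen : IsOpen {y | y ∈ U ∧ UniformOnFun.toFun 𝔖 g y = p0} := by
      rw [isOpen_iff_mem_nhds]
      rintro y ⟨hyU, hyp⟩
      obtain ⟨r, hr, hballU, hloc⟩ := hAloc y hyU hyp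
      filter_upwards [ball_mem_nhds y (by positivity : (0:ℝ) < r/2)] with x hx
      exact ⟨hballU (ball_subset_ball (by linarith) hx), hloc x hx⟩
    obtain ⟨q, hqU, hqA, hqB⟩ := hUc.isPreconnected _ _ hAopen hBopen
      (fun y hy => by
        by_cases hcy : UniformOnFun.toFun 𝔖 g y = p0
        · exact Or.inl ⟨hy, hcy⟩
        · exact Or.inr ⟨hy, hcy⟩)
      ⟨z0, hz0, hz0, hgz0⟩ ⟨z, hzU, hzU, hnep⟩
    exact hqB.2 hqA.2
  -- Part 1
  have part1 : ∀ K ⊆ U, IsCompact K → TendstoUniformlyOn h (fun _ => p0) atTop K := by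
    intro K hKU hKc
    rw [Metric.tendstoUniformlyOn_iff]
    by_contra hcon
    push_neg at hcon
    obtain ⟨ε, hε, hfreq⟩ := hcon
    have hfreq' : ∃ᶠ j in atTop, j ∈ {j | ∃ x ∈ K, ε ≤ dist p0 (h j x)} := by
      apply hfreq.mono
      intro j hj
      exact hj
    haveI hTne : (atTop ⊓ 𝓟 {j | ∃ x ∈ K, ε ≤ dist p0 (h j x)}).NeBot :=
      frequently_iff_neBot.mp hfreq'
    set G : Filter (EuclideanSpace ℂ (Fin m) →ᵤ[𝔖] EuclideanSpace ℂ (Fin n)) :=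
      map H' (atTop ⊓ 𝓟 {j | ∃ x ∈ K, ε ≤ dist p0 (h j x)}) with hG_def
    haveI hGne : G.NeBot := map_neBot
    have hGS : G ≤ 𝓟 (closure (range H')) := by
      rw [le_principal_iff, hG_def, mem_map]
      filter_upwards with j
      exact subset_closure (mem_range_self j)
    obtain ⟨g, hgS, hgG⟩ := hScomp.exists_clusterPt hGS
    have hgcl : ClusterPt g (map H' atTop) := by
      apply hgG.mono
      exact map_mono inf_le_left
    have hgp := cluster g hgcl
    haveI : (nhds g ⊓ G).NeBot := hgG
    have hidt : Tendsto id (nhds g ⊓ G) (nhds g) := tendsto_id'.mpr inf_le_left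
    have huc2 : TendstoUniformlyOn (fun ψ => UniformOnFun.toFun 𝔖 ψ)
        (UniformOnFun.toFun 𝔖 g) (nhds g ⊓ G) K :=
      UniformOnFun.tendsto_iff_tendstoUniformlyOn.mp hidt K ⟨hKU, hKc⟩
    have h1 := (Metric.tendstoUniformlyOn_iff.mp huc2) ε hε
    have h2 : ∀ᶠ ψ in nhds g ⊓ G, ∃ j, (∃ x ∈ K, ε ≤ dist p0 (h j x)) ∧ ψ = H' j := by
      apply Filter.Eventually.filter_mono (inf_le_right : nhds g ⊓ G ≤ G)
      rw [hG_def, eventually_map]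
      filter_upwards [mem_inf_of_right (mem_principal_self _)] with j hj
      exact ⟨j, hj, rfl⟩
    obtain ⟨ψ, hψ1, j, ⟨x, hxK, hxd⟩, rfl⟩ := (h1.and h2).exists
    have h3 := hψ1 x hxK
    rw [hgp x (hKU hxK)] at h3
    exact absurd h3 (not_lt.mpr hxd)
  -- Part 2
  have part2 : ∀ K ⊆ U, IsCompact K →
      TendstoUniformlyOn (fun j z => fderiv ℂ (h j) z)
        (fun _ => (0 : EuclideanSpace ℂ (Fin m) →L[ℂ] EuclideanSpace ℂ (Fin n)))
        atTop K := by
    intro K hKU hKc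
    obtain ⟨δ, hδ, hthick⟩ := hKc.exists_thickening_subset_open hUo hKU
    set r : ℝ := δ/2 with hr_def
    have hr : 0 < r := by positivity
    set K' : Set (EuclideanSpace ℂ (Fin m)) := cthickening r K with hK'_def
    have hK'c : IsCompact K' := hKc.cthickening
    have hK'U : K' ⊆ U := by
      refine Subset.trans ?_ hthick
      rw [hK'_def]
      exact cthickening_subset_thickening' hδ (by linarith) K
    have h1 := part1 K' hK'U hK'c
    rw [Metric.tendstoUniformlyOn_iff] at h1 ⊢
    intro ε hε
    filter_upwards [h1 (ε*r/4) (by positivity)] with j hj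
    intro x hxK
    rw [dist_comm, dist_zero_right]
    have hsub : ball x r ⊆ K' := by
      refine Subset.trans ball_subset_closedBall ?_
      rw [hK'_def]
      exact closedBall_subset_cthickening hxK r
    have hb : ∀ v : EuclideanSpace ℂ (Fin m), ‖fderiv ℂ (h j) x v‖ ≤ (ε/2) * ‖v‖ := by
      intro v
      rcases eq_or_ne v 0 with rfl | hv
      · simp
      have hvn : (0:ℝ) < ‖v‖ := norm_pos_iff.mpr hv
      set R : ℝ := r / ‖v‖ with hR_def
      have hRpos : 0 < R := by positivity
      set sl : ℂ → EuclideanSpace ℂ (Fin n) := fun t => h j (x + t • v) with hsl_def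
      have hmapball : ∀ t ∈ ball (0:ℂ) R, x + t • v ∈ ball x r := by
        intro t ht
        simp only [mem_ball, dist_eq_norm, add_sub_cancel_left]
        rw [norm_smul]
        have h2 : ‖t‖ < R := by simpa using ht
        calc ‖t‖ * ‖v‖ < R * ‖v‖ := by exact mul_lt_mul_of_pos_right h2 hvn
        _ = r := by rw [hR_def]; field_simp
      have hsl_diff : DifferentiableOn ℂ sl (ball (0:ℂ) R) := by
        apply (hdiff j).comp
        · exact ((differentiable_const x).add (differentiable_id.smul_const v)).differentiableOn
        · intro t ht
          exact hK'U (hsub (hmapball t ht))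
      have hmapsto : MapsTo sl (ball (0:ℂ) R) (ball (sl 0) (ε*r/2)) := by
        intro t ht
        have h3 : dist p0 (sl t) < ε*r/4 := hj _ (hsub (hmapball t ht))
        have h4 : dist p0 (sl 0) < ε*r/4 := hj _ (hsub (hmapball 0 (mem_ball_self hRpos)))
        rw [mem_ball]
        calc dist (sl t) (sl 0) ≤ dist (sl t) p0 + dist p0 (sl 0) := dist_triangle _ _ _
        _ = dist p0 (sl t) + dist p0 (sl 0) := by rw [dist_comm (sl t) p0]
        _ < ε*r/4 + ε*r/4 := add_lt_add h3 h4
        _ = ε*r/2 := by ring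
      have hderiv : ‖deriv sl 0‖ ≤ (ε*r/2) / R :=
        Complex.norm_deriv_le_div_of_mapsTo_ball hsl_diff (hmapsto.mono_right ball_subset_closedBall) hRpos
      have hxU : x ∈ U := hKU hxK
      have hdx : DifferentiableAt ℂ (h j) x :=
        (hdiff j).differentiableAt (hUo.mem_nhds hxU)
      have hch : deriv sl 0 = fderiv ℂ (h j) x v := by
        have hline : HasDerivAt (fun t : ℂ => x + t • v) v 0 := by
          simpa using ((hasDerivAt_id (0:ℂ)).smul_const v).const_add x
        have h5 : x + (0:ℂ) • v = x := by simp
        have h6 : HasDerivAt sl (fderiv ℂ (h j) x v) 0 := by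
          have h8 : HasFDerivAt (h j) (fderiv ℂ (h j) x) (x + (0:ℂ) • v) := by
            rw [h5]
            exact hdx.hasFDerivAt
          exact h8.comp_hasDerivAt 0 hline
        exact h6.deriv
      rw [← hch]
      calc ‖deriv sl 0‖ ≤ (ε*r/2) / R := hderiv
      _ = (ε/2) * ‖v‖ := by rw [hR_def]; field_simp
    have h7 : ‖fderiv ℂ (h j) x‖ ≤ ε/2 :=
      ContinuousLinearMap.opNorm_le_bound _ (by positivity) hb
    linarith
  refine ⟨part1, part2, ?_⟩
  -- Part 3
  have h3 := part2 {z0} (singleton_subset_iff.mpr hz0) isCompact_singleton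
  rw [Metric.tendstoUniformlyOn_iff] at h3
  rw [Metric.tendsto_nhds]
  intro ε hε
  filter_upwards [h3 ε hε] with j hj
  have := hj z0 (mem_singleton z0)
  rw [dist_zero_left] at this
  simpa [Real.dist_eq, abs_of_nonneg (norm_nonneg _)] using this
end
end

section
/- Let U ⊆ ℂⁿ be open and connected, z⁰ ∈ U, let K₀ ⊆ U be compact, and let V ⊆ U be an open connected set with K₀ ∪ {z⁰} ⊆ V and with compact closure V̄ ⊆ U. Let C > 0. Then there exists a constant C′ > 0, depending only on z⁰, K₀, V and C (and not on ω), such that every holomorphic map ω : U → ℂⁿ satisfying (a) Dω(z⁰) = Id, and (b) sup_{z∈K} ‖D²ω(z)‖ ≤ C · sup_{z∈K} ‖Dω(z)‖ for every compact subset K ⊆ V̄, also satisfies sup_{z∈K₀} ‖Dω(z)‖ ≤ C′. -/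
open Metric Set Filter Complex intervalIntegral MeasureTheory

set_option maxHeartbeats 1000000
set_option synthInstance.maxHeartbeats 200000

noncomputable section

variable {H : Type*} [NormedAddCommGroup H] [NormedSpace ℂ H]
variable {F : Type*} [NormedAddCommGroup F] [NormedSpace ℂ F] [CompleteSpace F]

/-- Cauchy formula for the directional derivative of a holomorphic map. -/
lemma dirderiv_eq_circleIntegral {f : H → F} {s : Set H} (hs : IsOpen s)
    (hf : DifferentiableOn ℂ f s) {x : H} {v : H} {r : ℝ} (hr : 0 < r)
    (hsub : ∀ ζ : ℂ, ‖ζ‖ ≤ r → x + ζ • v ∈ s) :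
    fderiv ℂ f x v
      = (2 * Real.pi * Complex.I : ℂ)⁻¹ • ∮ z in C(0, r), (z ^ 2)⁻¹ • f (x + z • v) := by
  set φ : ℂ → F := fun ζ => f (x + ζ • v) with hφdef
  have hxmem : x ∈ s := by
    have := hsub 0 (by simp [hr.le]); simpa using this
  have hφ : DifferentiableOn ℂ φ (closedBall 0 r) := by
    apply DifferentiableOn.comp hf
    · exact ((differentiable_id.smul_const v).const_add x).differentiableOn
    · intro ζ hζ
      exact hsub ζ (by simpa using mem_closedBall_zero_iff.1 hζ)
  lift r to NNReal using hr.le with R hR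
  have hR0 : 0 < R := by exact_mod_cast hr
  have hps : HasFPowerSeriesOnBall φ (cauchyPowerSeries φ 0 R) 0 R :=
    hφ.hasFPowerSeriesOnBall hR0
  have hderiv : deriv φ 0 = (cauchyPowerSeries φ 0 R).coeff 1 :=
    hps.hasFPowerSeriesAt.deriv
  have hda : DifferentiableAt ℂ f x := hf.differentiableAt (hs.mem_nhds hxmem)
  have hpath : HasDerivAt (fun ζ : ℂ => x + ζ • v) v 0 := by
    simpa using ((hasDerivAt_id (0 : ℂ)).smul_const v).const_add x
  have hφd : HasDerivAt φ (fderiv ℂ f x v) 0 := by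
    have hda' : HasFDerivAt f (fderiv ℂ f x) (x + (0:ℂ) • v) := by
      simpa using hda.hasFDerivAt
    have := hda'.comp_hasDerivAt 0 hpath
    exact this
  have h1 : fderiv ℂ f x v = (cauchyPowerSeries φ 0 R).coeff 1 := by
    rw [← hderiv, hφd.deriv]
  rw [h1]
  have h2 := cauchyPowerSeries_apply φ 0 R 1 1
  have h3 : (cauchyPowerSeries φ 0 R).coeff 1 = cauchyPowerSeries φ 0 R 1 fun _ => 1 := rfl
  rw [h3, h2]
  congr 1
  refine circleIntegral.integral_congr hr.le fun z hz => ?_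
  have hzne : z ≠ 0 := by
    intro h; rw [h] at hz; simp [mem_sphere_iff_norm] at hz; exact hr.ne' hz.symm
  simp only [sub_zero, one_div, pow_one, smul_smul]
  congr 1
  rw [sq, mul_inv]


/-- Cauchy estimate: bound on the derivative from a bound on the function. -/
lemma norm_fderiv_le_of_bound {f : H → F} {s : Set H} (hs : IsOpen s)
    (hf : DifferentiableOn ℂ f s) {x : H} {r M : ℝ} (hr : 0 < r)
    (hsub : closedBall x r ⊆ s) (hM : ∀ y ∈ closedBall x r, ‖f y‖ ≤ M) :
    ‖fderiv ℂ f x‖ ≤ M / r := by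
  have hM0 : 0 ≤ M := le_trans (norm_nonneg _) (hM x (mem_closedBall_self hr.le))
  refine ContinuousLinearMap.opNorm_le_bound _ (by positivity) fun v => ?_
  rcases eq_or_ne v 0 with rfl | hv
  · simp
  have hv0 : 0 < ‖v‖ := norm_pos_iff.2 hv
  set ρ : ℝ := r / ‖v‖ with hρdef
  have hρ : 0 < ρ := div_pos hr hv0
  have hsubcb : ∀ ζ : ℂ, ‖ζ‖ ≤ ρ → x + ζ • v ∈ closedBall x r := by
    intro ζ hζ
    have : dist (x + ζ • v) x = ‖ζ‖ * ‖v‖ := by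
      rw [dist_eq_norm]
      simp [norm_smul]
    rw [mem_closedBall, this]
    calc ‖ζ‖ * ‖v‖ ≤ ρ * ‖v‖ := by gcongr
    _ = r := by rw [hρdef, div_mul_cancel₀ _ hv0.ne']
  have hsub' : ∀ ζ : ℂ, ‖ζ‖ ≤ ρ → x + ζ • v ∈ s := fun ζ hζ => hsub (hsubcb ζ hζ)
  rw [dirderiv_eq_circleIntegral hs hf hρ hsub']
  rw [norm_smul]
  have hnrm : ‖(2 * (Real.pi : ℂ) * Complex.I)⁻¹‖ = (2 * Real.pi)⁻¹ := by
    simp [norm_inv, map_mul,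
      _root_.abs_of_nonneg Real.pi_pos.le]
  have hbd : ‖∮ z in C(0, ρ), (z ^ 2)⁻¹ • f (x + z • v)‖
      ≤ 2 * Real.pi * ρ * (M / ρ ^ 2) := by
    have := circleIntegral.norm_integral_le_of_norm_le_const (c := (0:ℂ)) (R := ρ)
      (C := M / ρ ^ 2) hρ.le (f := fun z => (z ^ 2)⁻¹ • f (x + z • v)) ?_
    · simpa [_root_.abs_of_nonneg hρ.le] using this
    · intro z hz
      have hzabs : ‖z‖ = ρ := by
        simpa using mem_sphere_zero_iff_norm.1 hz
      rw [norm_smul]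
      have h1 : ‖((z:ℂ) ^ 2)⁻¹‖ = (ρ ^ 2)⁻¹ := by
        simp [norm_inv, map_pow, hzabs]
      rw [h1, div_eq_mul_inv, mul_comm M]
      gcongr
      exact hM _ (hsubcb z (le_of_eq hzabs))
  calc ‖(2 * (Real.pi:ℂ) * Complex.I)⁻¹‖ * ‖∮ z in C(0, ρ), (z ^ 2)⁻¹ • f (x + z • v)‖
      ≤ (2 * Real.pi)⁻¹ * (2 * Real.pi * ρ * (M / ρ ^ 2)) := by
        rw [hnrm]; gcongr
    _ = M / ρ := by
        field_simp
    _ = M / r * ‖v‖ := by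
        rw [hρdef]
        field_simp

variable [MeasurableSpace H] [BorelSpace H] [ProperSpace H]
  [SecondCountableTopology (H →L[ℂ] F)]

/-- The directional derivative of a holomorphic map is holomorphic. -/
lemma differentiableOn_dirderiv {f : H → F} {s : Set H} (hs : IsOpen s)
    (hf : DifferentiableOn ℂ f s) (v : H) :
    DifferentiableOn ℂ (fun x => fderiv ℂ f x v) s := by
  intro x₀ hx₀
  suffices h : DifferentiableAt ℂ (fun x => fderiv ℂ f x v) x₀ from
    h.differentiableWithinAt
  obtain ⟨δ, hδ0, hδs⟩ : ∃ δ > 0, closedBall x₀ δ ⊆ s :=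
    (nhds_basis_closedBall.mem_iff).1 (hs.mem_nhds hx₀)
  set c : ℝ := 1 + ‖v‖ with hc
  have hc0 : 0 < c := by positivity
  have hvc : ‖v‖ ≤ c := by simp [hc]
  set r : ℝ := δ / (4 * c) with hrdef
  have hr : 0 < r := by positivity
  set ε : ℝ := δ / 4 with hεdef
  have hε : 0 < ε := by positivity
  set ρ : ℝ := δ / 4 with hρdef
  have hρ : 0 < ρ := by positivity
  -- the key containment
  have hkey : ∀ x ∈ ball x₀ ε, ∀ ζ : ℂ, ‖ζ‖ ≤ r →
      closedBall (x + ζ • v) ρ ⊆ closedBall x₀ δ := by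
    intro x hx ζ hζ y hy
    have h1 : dist y x₀ ≤ dist y (x + ζ • v) + dist (x + ζ • v) x + dist x x₀ :=
      dist_triangle4 y (x + ζ • v) x x₀
    have h2 : dist (x + ζ • v) x = ‖ζ‖ * ‖v‖ := by
      rw [dist_eq_norm]; simp [norm_smul]
    have h3 : ‖ζ‖ * ‖v‖ ≤ r * c := by
      apply mul_le_mul hζ hvc (norm_nonneg _) hr.le
    have h4 : r * c = δ / 4 := by
      rw [hrdef]; field_simp
    have h5 : dist y x₀ ≤ ρ + δ / 4 + ε := by
      have := mem_closedBall.1 hy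
      have hxd := (mem_ball.1 hx).le
      calc dist y x₀ ≤ dist y (x + ζ • v) + dist (x + ζ • v) x + dist x x₀ := h1
        _ ≤ ρ + δ / 4 + ε := by
            gcongr
            rw [h2]; rw [← h4]; exact h3
      
    rw [mem_closedBall]
    calc dist y x₀ ≤ ρ + δ / 4 + ε := h5
      _ ≤ δ := by rw [hρdef, hεdef]; linarith
  -- bound on f
  obtain ⟨M, hM⟩ : ∃ M, ∀ y ∈ closedBall x₀ δ, ‖f y‖ ≤ M :=
    (isCompact_closedBall x₀ δ).exists_bound_of_continuousOn (hf.continuousOn.mono hδs)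
  have hM0 : 0 ≤ M := le_trans (norm_nonneg _) (hM x₀ (mem_closedBall_self hδ0.le))
  -- bound on fderiv
  have hfd_bd : ∀ x ∈ ball x₀ ε, ∀ ζ : ℂ, ‖ζ‖ ≤ r →
      ‖fderiv ℂ f (x + ζ • v)‖ ≤ M / ρ := by
    intro x hx ζ hζ
    exact norm_fderiv_le_of_bound hs hf hρ
      (fun y hy => hδs (hkey x hx ζ hζ hy))
      (fun y hy => hM y (hkey x hx ζ hζ hy))
  -- membership in s of the relevant points
  have hmem : ∀ x ∈ ball x₀ ε, ∀ ζ : ℂ, ‖ζ‖ ≤ r → x + ζ • v ∈ s := by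
    intro x hx ζ hζ
    exact hδs (hkey x hx ζ hζ (mem_closedBall_self hρ.le))
  -- set up the parametric integral
  set sc : ℝ → ℂ := fun θ => deriv (circleMap 0 r) θ * ((circleMap 0 r θ) ^ 2)⁻¹ with hsc
  set Fn : H → ℝ → F := fun x θ => sc θ • f (x + circleMap 0 r θ • v) with hFn
  set Fn' : H → ℝ → H →L[ℂ] F := fun x θ => sc θ • fderiv ℂ f (x + circleMap 0 r θ • v)
    with hFn'
  have habs : ∀ θ : ℝ, ‖circleMap 0 r θ‖ = r := by
    intro θ; simp [norm_circleMap_zero, _root_.abs_of_nonneg hr.le]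
  have hcm_ne : ∀ θ : ℝ, circleMap 0 r θ ≠ 0 := fun θ => circleMap_ne_center hr.ne'
  have hsc_cont : Continuous sc := by
    simp only [hsc, deriv_circleMap]
    exact ((continuous_circleMap 0 r).mul continuous_const).mul
      (((continuous_circleMap 0 r).pow 2).inv₀ fun θ => pow_ne_zero 2 (hcm_ne θ))
  have hsc_norm : ∀ θ : ℝ, ‖sc θ‖ = r⁻¹ := by
    intro θ
    simp only [hsc, deriv_circleMap]
    rw [norm_mul, norm_mul]
    simp only [norm_mul, norm_pow, norm_inv, habs θ, Complex.norm_I]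
    rw [sq]
    field_simp
  have hFn_cont : ∀ x ∈ ball x₀ ε, Continuous (Fn x) := by
    intro x hx
    apply hsc_cont.smul
    apply (hf.continuousOn.mono (by intro y hy; exact hy : s ⊆ s)).comp_continuous
    · exact continuous_const.add ((continuous_circleMap 0 r).smul continuous_const)
    · intro θ; exact hmem x hx _ (le_of_eq (habs θ))
  have hptsmeas : Measurable fun θ : ℝ => x₀ + circleMap 0 r θ • v :=
    (continuous_const.add ((continuous_circleMap 0 r).smul continuous_const)).measurable
  have hF'_meas : AEStronglyMeasurable (Fn' x₀)
      (volume.restrict (Set.uIoc (0:ℝ) (2 * Real.pi))) := by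
    have h1 : StronglyMeasurable fun θ : ℝ => fderiv ℂ f (x₀ + circleMap 0 r θ • v) :=
      ((measurable_fderiv ℂ f).comp hptsmeas).stronglyMeasurable
    exact (hsc_cont.stronglyMeasurable.smul h1).aestronglyMeasurable
  have hx₀b : x₀ ∈ ball x₀ ε := mem_ball_self hε
  have hdom := intervalIntegral.hasFDerivAt_integral_of_dominated_of_fderiv_le
    (𝕜 := ℂ) (μ := MeasureTheory.volume) (F := Fn) (F' := Fn') (x₀ := x₀)
    (a := 0) (b := 2 * Real.pi) (bound := fun _ => r⁻¹ * (M / ρ)) (ball_mem_nhds x₀ hε)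
    (Filter.eventually_of_mem (ball_mem_nhds x₀ hε)
      (fun x hx => ((hFn_cont x hx).aestronglyMeasurable)))
    ((hFn_cont x₀ hx₀b).intervalIntegrable _ _)
    hF'_meas
    (Filter.Eventually.of_forall fun θ => fun _ x hx => by
      simp only [hFn']
      have hns := norm_smul (α := ℂ) (β := H →L[ℂ] F) (sc θ)
        (fderiv ℂ f (x + circleMap 0 r θ • v))
      rw [hns, hsc_norm θ]
      gcongr
      exact hfd_bd x hx _ (le_of_eq (habs θ)))
    (intervalIntegrable_const)
    (Filter.Eventually.of_forall fun θ => fun _ x hx => by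
      have hmem' := hmem x hx _ (le_of_eq (habs θ))
      have hfd : HasFDerivAt f (fderiv ℂ f (x + circleMap 0 r θ • v))
          (x + circleMap 0 r θ • v) :=
        (hf.differentiableAt (hs.mem_nhds hmem')).hasFDerivAt
      have hcomp := hfd.comp x ((hasFDerivAt_id x).add_const (circleMap 0 r θ • v))
      simp only [ContinuousLinearMap.comp_id] at hcomp
      exact hcomp.const_smul (sc θ))
  -- identify with the circle integral
  have hGdiff : DifferentiableAt ℂ
      (fun x => (2 * (Real.pi:ℝ) * Complex.I : ℂ)⁻¹ •
        ∮ z in C(0, r), (z ^ 2)⁻¹ • f (x + z • v)) x₀ := by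
    have : (fun x => (2 * (Real.pi:ℝ) * Complex.I : ℂ)⁻¹ •
        ∮ z in C(0, r), (z ^ 2)⁻¹ • f (x + z • v))
        = fun x => (2 * (Real.pi:ℝ) * Complex.I : ℂ)⁻¹ •
          ∫ θ in (0:ℝ)..(2 * Real.pi), Fn x θ := by
      funext x
      congr 1
      rw [circleIntegral]
      apply intervalIntegral.integral_congr
      intro θ _
      rw [hFn, hsc]
      simp only [smul_smul]
    rw [this]
    exact (hdom.const_smul _).differentiableAt
  have heq : (fun x => fderiv ℂ f x v) =ᶠ[nhds x₀]
      (fun x => (2 * (Real.pi:ℝ) * Complex.I : ℂ)⁻¹ •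
        ∮ z in C(0, r), (z ^ 2)⁻¹ • f (x + z • v)) := by
    apply Filter.eventually_of_mem (ball_mem_nhds x₀ hε)
    intro x hx
    exact dirderiv_eq_circleIntegral hs hf hr (hmem x hx)
  exact (Filter.EventuallyEq.differentiableAt_iff heq).2 hGdiff

instance euclideanComplexMeasurableSpace {ι : Type*} :
    MeasurableSpace (EuclideanSpace ℂ ι) := borel _

instance euclideanComplexBorelSpace {ι : Type*} :
    BorelSpace (EuclideanSpace ℂ ι) := ⟨rfl⟩

/-- The derivative of a holomorphic map on a finite-dimensional domain is holomorphic. -/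
lemma differentiableOn_fderiv [SecondCountableTopology F] {m : ℕ}
    {f : EuclideanSpace ℂ (Fin m) → F} {s : Set (EuclideanSpace ℂ (Fin m))}
    (hs : IsOpen s) (hf : DifferentiableOn ℂ f s) :
    DifferentiableOn ℂ (fderiv ℂ f) s := by
  have hrepr : ∀ L : EuclideanSpace ℂ (Fin m) →L[ℂ] F,
      L = ∑ j : Fin m, ContinuousLinearMap.smulRight (EuclideanSpace.proj j)
        (L (EuclideanSpace.single j 1)) := by
    intro L
    ext u
    rw [ContinuousLinearMap.sum_apply]
    simp only [ContinuousLinearMap.smulRight_apply]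
    symm
    calc ∑ j : Fin m, EuclideanSpace.proj j u • L (EuclideanSpace.single j 1)
        = ∑ j : Fin m, L ((EuclideanSpace.basisFun (Fin m) ℂ).toBasis.repr u j •
            (EuclideanSpace.basisFun (Fin m) ℂ).toBasis j) := by
          apply Finset.sum_congr rfl
          intro j _
          have hb1 : (EuclideanSpace.basisFun (Fin m) ℂ).toBasis j
              = EuclideanSpace.single j 1 := by
            simp [OrthonormalBasis.coe_toBasis, EuclideanSpace.basisFun_apply]
          have hb2 : (EuclideanSpace.basisFun (Fin m) ℂ).toBasis.repr u j = u j := by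
            simp [OrthonormalBasis.coe_toBasis_repr_apply, EuclideanSpace.basisFun_repr]
          have hb3 : EuclideanSpace.proj j u = u j := rfl
          rw [_root_.map_smul, hb1, hb2, hb3]
      _ = L u := by
          rw [← map_sum]
          congr 1
          exact (EuclideanSpace.basisFun (Fin m) ℂ).toBasis.sum_repr u
  have hdiff : DifferentiableOn ℂ (fun x => ∑ j : Fin m,
      (ContinuousLinearMap.smulRightL ℂ (EuclideanSpace ℂ (Fin m)) F
        (EuclideanSpace.proj j)) (fderiv ℂ f x (EuclideanSpace.single j 1))) s := by
    apply DifferentiableOn.fun_sum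
    intro j _
    exact ((ContinuousLinearMap.smulRightL ℂ (EuclideanSpace ℂ (Fin m)) F
      (EuclideanSpace.proj j)).differentiable.comp_differentiableOn
        (differentiableOn_dirderiv hs hf (EuclideanSpace.single j 1)))
  apply hdiff.congr
  intro x _
  conv_lhs => rw [hrepr (fderiv ℂ f x)]
  rfl

/-- Gronwall estimate along a segment. -/
lemma norm_le_exp_of_segment {G : Type*} [NormedAddCommGroup G] [NormedSpace ℂ G]
    {f : H → G} {s : Set H} (hs : IsOpen s) (hfd : DifferentiableOn ℂ f s)
    {C : ℝ} (hC : 0 ≤ C) (hbound : ∀ x ∈ s, ‖fderiv ℂ f x‖ ≤ C * ‖f x‖)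
    {a b : H} (hseg : segment ℝ a b ⊆ s) :
    ‖f b‖ ≤ ‖f a‖ * Real.exp (C * ‖b - a‖) := by
  set γ : ℝ → H := fun t => a + t • (b - a) with hγ
  have hγmem : ∀ t ∈ Icc (0:ℝ) 1, γ t ∈ s := by
    intro t ht
    apply hseg
    rw [segment_eq_image']
    exact ⟨t, ht, rfl⟩
  set g : ℝ → G := fun t => f (γ t) with hg
  have hγd : ∀ t : ℝ, HasDerivAt γ (b - a) t := by
    intro t
    simpa [hγ] using ((hasDerivAt_id t).smul_const (b - a)).const_add a
  have hgd : ∀ t ∈ Icc (0:ℝ) 1, HasDerivAt g (fderiv ℂ f (γ t) (b - a)) t := by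
    intro t ht
    have hda : DifferentiableAt ℂ f (γ t) := hfd.differentiableAt (hs.mem_nhds (hγmem t ht))
    exact (hda.hasFDerivAt.restrictScalars ℝ).comp_hasDerivAt t (hγd t)
  have hgc : ContinuousOn g (Icc (0:ℝ) 1) := by
    intro t ht
    exact ((hgd t ht).continuousAt).continuousWithinAt
  have key := norm_le_gronwallBound_of_norm_deriv_right_le (f := g)
    (f' := fun t => fderiv ℂ f (γ t) (b - a)) (δ := ‖f a‖) (K := C * ‖b - a‖) (ε := 0)
    (a := 0) (b := 1) hgc
    (fun t ht => ((hgd t (Ico_subset_Icc_self ht)).hasDerivWithinAt))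
    (by simp [hg, hγ])
    (fun t ht => by
      have h1 : ‖fderiv ℂ f (γ t) (b - a)‖ ≤ ‖fderiv ℂ f (γ t)‖ * ‖b - a‖ :=
        (fderiv ℂ f (γ t)).le_opNorm _
      have h2 := hbound _ (hγmem t (Ico_subset_Icc_self ht))
      calc ‖fderiv ℂ f (γ t) (b - a)‖ ≤ (C * ‖f (γ t)‖) * ‖b - a‖ :=
            h1.trans (by gcongr)
        _ = C * ‖b - a‖ * ‖g t‖ + 0 := by rw [hg]; ring)
  have := key 1 (by norm_num)
  rw [gronwallBound_ε0] at this
  have hγ1 : γ 1 = b := by simp [hγ]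
  have hg1 : g 1 = f b := by rw [hg]; simp only; rw [hγ1]
  rw [← hg1]
  refine this.trans (le_of_eq ?_)
  norm_num

theorem stmt_12 (n : ℕ)
    (U : Set (EuclideanSpace ℂ (Fin n))) (hUo : IsOpen U) (hUc : IsConnected U)
    (z0 : EuclideanSpace ℂ (Fin n)) (hz0 : z0 ∈ U)
    (K0 : Set (EuclideanSpace ℂ (Fin n))) (hK0 : IsCompact K0) (hK0U : K0 ⊆ U)
    (V : Set (EuclideanSpace ℂ (Fin n))) (hVo : IsOpen V) (hVc : IsConnected V)
    (hK0V : K0 ∪ {z0} ⊆ V)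
    (hVcomp : IsCompact (closure V)) (hVU : closure V ⊆ U)
    (C : ℝ) (hC : 0 < C) :
    ∃ C' > (0 : ℝ),
      ∀ ω : EuclideanSpace ℂ (Fin n) → EuclideanSpace ℂ (Fin n),
        DifferentiableOn ℂ ω U →
        fderiv ℂ ω z0 = ContinuousLinearMap.id ℂ (EuclideanSpace ℂ (Fin n)) →
        (∀ K ⊆ closure V, IsCompact K →
          sSup ((fun z => ‖fderiv ℂ (fderiv ℂ ω) z‖) '' K) ≤
            C * sSup ((fun z => ‖fderiv ℂ ω z‖) '' K)) →
        ∀ z ∈ K0, ‖fderiv ℂ ω z‖ ≤ C' := by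
  classical
  have hCnn : (0:ℝ) ≤ C := hC.le
  have hVU' : V ⊆ U := subset_closure.trans hVU
  have hz0V : z0 ∈ V := hK0V (Or.inr rfl)
  -- ball transfer estimate
  have htrans : ∀ z ∈ V, ∃ r > (0:ℝ), ball z r ⊆ V ∧
      ∀ w₁ ∈ ball z r, ∀ w₂ ∈ ball z r,
      ∀ ω : EuclideanSpace ℂ (Fin n) → EuclideanSpace ℂ (Fin n),
        DifferentiableOn ℂ ω U →
        (∀ x ∈ V, ‖fderiv ℂ (fderiv ℂ ω) x‖ ≤ C * ‖fderiv ℂ ω x‖) →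
        ‖fderiv ℂ ω w₂‖ ≤ ‖fderiv ℂ ω w₁‖ * Real.exp (C * (2 * r)) := by
    intro z hz
    obtain ⟨r, hr0, hrV⟩ := Metric.isOpen_iff.1 hVo z hz
    refine ⟨r, hr0, hrV, ?_⟩
    intro w₁ hw₁ w₂ hw₂ ω hω hpt
    have hfd : DifferentiableOn ℂ (fderiv ℂ ω) V :=
      (differentiableOn_fderiv hUo hω).mono hVU'
    have hseg : segment ℝ w₁ w₂ ⊆ V := fun y hy =>
      hrV ((convex_ball z r).segment_subset hw₁ hw₂ hy)
    refine (norm_le_exp_of_segment hVo hfd hCnn hpt hseg).trans ?_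
    have hd : ‖w₂ - w₁‖ ≤ 2 * r := by
      have h1 : dist w₂ w₁ ≤ dist w₂ z + dist z w₁ := dist_triangle _ _ _
      have h2 : dist w₂ z < r := mem_ball.1 hw₂
      have h3 : dist z w₁ < r := by rw [dist_comm]; exact mem_ball.1 hw₁
      rw [← dist_eq_norm]
      linarith
    gcongr
  -- the set of uniformly bounded points
  set S : Set (EuclideanSpace ℂ (Fin n)) := {z | z ∈ V ∧ ∃ M : ℝ,
    ∀ ω : EuclideanSpace ℂ (Fin n) → EuclideanSpace ℂ (Fin n),
      DifferentiableOn ℂ ω U →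
      fderiv ℂ ω z0 = ContinuousLinearMap.id ℂ (EuclideanSpace ℂ (Fin n)) →
      (∀ x ∈ V, ‖fderiv ℂ (fderiv ℂ ω) x‖ ≤ C * ‖fderiv ℂ ω x‖) →
      ‖fderiv ℂ ω z‖ ≤ M} with hSdef
  have hSsubV : S ⊆ V := fun z hz => hz.1
  -- S is open
  have hSopen : IsOpen S := by
    rw [Metric.isOpen_iff]
    intro z hz
    obtain ⟨hzV, M, hM⟩ := hz
    obtain ⟨r, hr0, hrV, hr⟩ := htrans z hzV
    refine ⟨r, hr0, ?_⟩
    intro w hw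
    refine ⟨hrV hw, M * Real.exp (C * (2 * r)), ?_⟩
    intro ω hω hid hpt
    refine (hr z (mem_ball_self hr0) w hw ω hω hpt).trans ?_
    gcongr
    exact hM ω hω hid hpt
  -- V \ S is open
  have hTopen : IsOpen (V \ S) := by
    rw [Metric.isOpen_iff]
    intro z hz
    obtain ⟨hzV, hzS⟩ := hz
    obtain ⟨r, hr0, hrV, hr⟩ := htrans z hzV
    refine ⟨r, hr0, ?_⟩
    intro w hw
    refine ⟨hrV hw, fun hwS => hzS ?_⟩
    obtain ⟨hwV, M, hM⟩ := hwS
    refine ⟨hzV, M * Real.exp (C * (2 * r)), ?_⟩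
    intro ω hω hid hpt
    refine (hr w hw z (mem_ball_self hr0) ω hω hpt).trans ?_
    gcongr
    exact hM ω hω hid hpt
  -- z0 ∈ S
  have hz0S : z0 ∈ S := by
    refine ⟨hz0V, 1, ?_⟩
    intro ω hω hid hpt
    rw [hid]
    exact ContinuousLinearMap.norm_id_le
  -- V ⊆ S by connectedness
  have hVS : V ⊆ S := by
    have hdisj : Disjoint S (V \ S) := disjoint_sdiff_right.mono_left le_rfl
    have hsub : V ⊆ S ∪ (V \ S) := by
      intro z hz
      by_cases h : z ∈ S
      · exact Or.inl h
      · exact Or.inr ⟨hz, h⟩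
    exact hVc.isPreconnected.subset_left_of_subset_union hSopen hTopen hdisj hsub
      ⟨z0, hz0V, hz0S⟩
  -- extract radii and constants for points of K0
  have hKS : ∀ z ∈ K0, ∃ r > (0:ℝ), ∃ M : ℝ,
      ∀ w ∈ ball z r,
      ∀ ω : EuclideanSpace ℂ (Fin n) → EuclideanSpace ℂ (Fin n),
        DifferentiableOn ℂ ω U →
        fderiv ℂ ω z0 = ContinuousLinearMap.id ℂ (EuclideanSpace ℂ (Fin n)) →
        (∀ x ∈ V, ‖fderiv ℂ (fderiv ℂ ω) x‖ ≤ C * ‖fderiv ℂ ω x‖) →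
        ‖fderiv ℂ ω w‖ ≤ M := by
    intro z hzK
    have hzV : z ∈ V := hK0V (Or.inl hzK)
    obtain ⟨hzV', M, hM⟩ := hVS hzV
    obtain ⟨r, hr0, hrV, hr⟩ := htrans z hzV
    refine ⟨r, hr0, M * Real.exp (C * (2 * r)), ?_⟩
    intro w hw ω hω hid hpt
    refine (hr z (mem_ball_self hr0) w hw ω hω hpt).trans ?_
    gcongr
    exact hM ω hω hid hpt
  choose! r hr0 M hM using hKS
  -- finite subcover
  obtain ⟨t, htK, htcov⟩ := hK0.elim_nhds_subcover (fun z => ball z (r z))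
    (fun z hz => ball_mem_nhds z (hr0 z hz))
  set C' : ℝ := 1 + ∑ z ∈ t, |M z| with hC'
  have hC'pos : 0 < C' := by
    have : (0:ℝ) ≤ ∑ z ∈ t, |M z| := Finset.sum_nonneg fun z _ => abs_nonneg _
    rw [hC']; linarith
  refine ⟨C', hC'pos, ?_⟩
  intro ω hω hid hb z hzK
  -- pointwise second-derivative bound from the sSup hypothesis
  have hpt : ∀ x ∈ V, ‖fderiv ℂ (fderiv ℂ ω) x‖ ≤ C * ‖fderiv ℂ ω x‖ := by
    intro x hx
    have := hb {x} (singleton_subset_iff.2 (subset_closure hx)) isCompact_singleton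
    simpa using this
  obtain ⟨w, hwt, hzw⟩ := Set.mem_iUnion₂.1 (htcov hzK)
  have hwK : w ∈ K0 := htK w hwt
  have hbd := hM w hwK z hzw ω hω hid hpt
  have h1 : M w ≤ |M w| := le_abs_self _
  have h2 : |M w| ≤ ∑ z ∈ t, |M z| :=
    Finset.single_le_sum (fun z _ => abs_nonneg (M z)) hwt
  rw [hC']
  linarith
end
end

section
/- Let Ωⱼ ⊆ ℂⁿ be open connected sets and Ω∞ ⊆ ℂⁿ an open connected set such that every compact subset of Ω∞ is contained in Ωⱼ for all sufficiently large j. Suppose that the infinitesimal Kobayashi metrics F_{Ωⱼ} converge to F_{Ω∞} uniformly on compact subsets of Ω∞ × ℂⁿ, and that F_{Ω∞} is continuous on Ω∞ × ℂⁿ. Then for all x, y ∈ Ω∞, limsup_{j→∞} d_{Ωⱼ}(x, y) ≤ d_{Ω∞}(x, y), where d denotes the integrated Kobayashi distance. -/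
open Metric Set Filter

noncomputable section

/-- The infinitesimal Kobayashi metric of an open set `Ω ⊆ ℂⁿ`:
`F_Ω(p, v) = inf { λ > 0 : ∃ f : Δ → Ω holomorphic, f(0) = p, λ • f'(0) = v }`. -/
def kobMetric (n : ℕ) (Ω : Set (EuclideanSpace ℂ (Fin n)))
    (p v : EuclideanSpace ℂ (Fin n)) : ℝ :=
  sInf {l : ℝ | 0 < l ∧ ∃ f : ℂ → EuclideanSpace ℂ (Fin n),
    DifferentiableOn ℂ f (ball (0 : ℂ) 1) ∧ MapsTo f (ball (0 : ℂ) 1) Ω ∧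
    f 0 = p ∧ l • deriv f 0 = v}

/-- A piecewise `C¹` path parametrized on `[0, 1]`. -/
def PiecewiseC1 {n : ℕ} (γ : ℝ → EuclideanSpace ℂ (Fin n)) : Prop :=
  ∃ (k : ℕ) (t : ℕ → ℝ), 0 < k ∧ t 0 = 0 ∧ t k = 1 ∧
    (∀ i < k, t i < t (i + 1)) ∧
    ∀ i < k, ContDiffOn ℝ 1 γ (Set.Icc (t i) (t (i + 1)))

/-- The integrated Kobayashi (pseudo)distance: the infimum of Kobayashi lengths of
piecewise `C¹` paths in `Ω` joining `x` to `y`. -/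
def kobDist (n : ℕ) (Ω : Set (EuclideanSpace ℂ (Fin n)))
    (x y : EuclideanSpace ℂ (Fin n)) : ℝ :=
  sInf {r : ℝ | ∃ γ : ℝ → EuclideanSpace ℂ (Fin n), PiecewiseC1 γ ∧
    (∀ t ∈ Set.Icc (0 : ℝ) 1, γ t ∈ Ω) ∧ γ 0 = x ∧ γ 1 = y ∧
    r = ∫ t in (0 : ℝ)..1, kobMetric n Ω (γ t) (deriv γ t)}

namespace Stmt14Aux

lemma kobMetric_nonneg (n : ℕ) (Ω : Set (EuclideanSpace ℂ (Fin n)))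
    (p v : EuclideanSpace ℂ (Fin n)) : 0 ≤ kobMetric n Ω p v :=
  Real.sInf_nonneg fun _ hl => hl.1.le

/-- Points reachable from `x` by a piecewise C¹ path inside `Ω`. -/
def Reaches {n : ℕ} (Ω : Set (EuclideanSpace ℂ (Fin n)))
    (x z : EuclideanSpace ℂ (Fin n)) : Prop :=
  ∃ γ : ℝ → EuclideanSpace ℂ (Fin n), PiecewiseC1 γ ∧
    (∀ t ∈ Set.Icc (0 : ℝ) 1, γ t ∈ Ω) ∧ γ 0 = x ∧ γ 1 = z

lemma reaches_segment {n : ℕ} {Ω : Set (EuclideanSpace ℂ (Fin n))}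
    {z w : EuclideanSpace ℂ (Fin n)}
    (h : ∀ s ∈ Set.Icc (0 : ℝ) 1, z + s • (w - z) ∈ Ω) : Reaches Ω z w := by
  refine ⟨fun s => z + s • (w - z), ⟨1, fun i => (i : ℝ), one_pos, by norm_num, by norm_num,
    ?_, ?_⟩, h, by simp, by simp⟩
  · intro i hi; interval_cases i; norm_num
  · intro i hi
    exact (contDiff_const.add (contDiff_id.smul contDiff_const)).contDiffOn

lemma reaches_self {n : ℕ} {Ω : Set (EuclideanSpace ℂ (Fin n))}
    {x : EuclideanSpace ℂ (Fin n)} (hx : x ∈ Ω) : Reaches Ω x x :=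
  reaches_segment fun s _ => by simpa using hx

lemma t_mono {k : ℕ} {t : ℕ → ℝ} (hlt : ∀ i < k, t i < t (i + 1)) :
    ∀ {i j : ℕ}, i ≤ j → j ≤ k → t i ≤ t j := by
  intro i j hij hjk
  induction j with
  | zero => interval_cases i; exact le_rfl
  | succ m ih =>
    rcases Nat.lt_succ_iff_lt_or_eq.mp (Nat.lt_succ_of_le hij) with h | h
    · exact (ih (Nat.lt_succ_iff.mp h) (by omega)).trans (hlt m (by omega)).le
    · exact h ▸ le_rfl

lemma reaches_trans {n : ℕ} {Ω : Set (EuclideanSpace ℂ (Fin n))}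
    {x z w : EuclideanSpace ℂ (Fin n)}
    (h1 : Reaches Ω x z) (h2 : Reaches Ω z w) : Reaches Ω x w := by
  obtain ⟨γ₁, ⟨k₁, t₁, hk₁, h01, h11, hlt₁, hcd₁⟩, hΩ₁, ha₁, hb₁⟩ := h1
  obtain ⟨γ₂, ⟨k₂, t₂, hk₂, h02, h12, hlt₂, hcd₂⟩, hΩ₂, ha₂, hb₂⟩ := h2
  set γ : ℝ → EuclideanSpace ℂ (Fin n) :=
    fun s => if s ≤ 1/2 then γ₁ (2*s) else γ₂ (2*s - 1) with hγ
  set T : ℕ → ℝ := fun i => if i ≤ k₁ then t₁ i / 2 else (t₂ (i - k₁) + 1) / 2 with hT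
  have hT1 : ∀ i ≤ k₁, T i = t₁ i / 2 := fun i hi => by simp [hT, hi]
  have hT2 : ∀ i, k₁ ≤ i → T i = (t₂ (i - k₁) + 1) / 2 := by
    intro i hi
    rcases eq_or_lt_of_le hi with h | h
    · subst h
      simp [hT, Nat.sub_self, h11, h02]
    · simp [hT, Nat.not_le.mpr h]
  have ht₁le : ∀ i ≤ k₁, t₁ i ≤ 1 := fun i hi => h11 ▸ t_mono hlt₁ hi le_rfl
  have ht₁ge : ∀ i ≤ k₁, 0 ≤ t₁ i := fun i hi => h01 ▸ t_mono hlt₁ (Nat.zero_le i) hi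
  have ht₂le : ∀ i ≤ k₂, t₂ i ≤ 1 := fun i hi => h12 ▸ t_mono hlt₂ hi le_rfl
  have ht₂ge : ∀ i ≤ k₂, 0 ≤ t₂ i := fun i hi => h02 ▸ t_mono hlt₂ (Nat.zero_le i) hi
  have hγeq1 : ∀ s : ℝ, s ≤ 1/2 → γ s = γ₁ (2*s) := by
    intro s hs
    show (if s ≤ 1/2 then γ₁ (2*s) else γ₂ (2*s - 1)) = γ₁ (2*s)
    rw [if_pos hs]
  have hγeq2 : ∀ s : ℝ, 1/2 ≤ s → γ s = γ₂ (2*s - 1) := by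
    intro s hs
    rcases eq_or_lt_of_le hs with h | h
    · have h2 : (2 : ℝ) * s = 1 := by rw [← h]; ring
      show (if s ≤ 1/2 then γ₁ (2*s) else γ₂ (2*s - 1)) = γ₂ (2*s - 1)
      rw [if_pos h.symm.le, h2]
      norm_num [hb₁, ha₂]
    · show (if s ≤ 1/2 then γ₁ (2*s) else γ₂ (2*s - 1)) = γ₂ (2*s - 1)
      rw [if_neg (not_le.mpr h)]
  refine ⟨γ, ⟨k₁ + k₂, T, by omega, by simpa [hT] using h01, ?_, ?_, ?_⟩, ?_, ?_, ?_⟩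
  · rw [hT2 _ (by omega)]
    simp [h12]
  · intro i hi
    rcases Nat.lt_or_ge i k₁ with h | h
    · rw [hT1 i h.le, hT1 (i+1) h]
      have := hlt₁ i h; linarith
    · rw [hT2 i h, hT2 (i+1) (by omega)]
      have h' : i + 1 - k₁ = (i - k₁) + 1 := by omega
      rw [h']
      have := hlt₂ (i - k₁) (by omega); linarith
  · intro i hi
    rcases Nat.lt_or_ge i k₁ with h | h
    · rw [hT1 i h.le, hT1 (i+1) h]
      have hle : ∀ s ∈ Set.Icc (t₁ i / 2) (t₁ (i+1) / 2), s ≤ (1:ℝ)/2 := by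
        intro s hs
        have := ht₁le (i+1) h
        have := hs.2; linarith
      have hcomp : ContDiffOn ℝ 1 (fun s : ℝ => γ₁ (2*s)) (Set.Icc (t₁ i / 2) (t₁ (i+1) / 2)) := by
        refine (hcd₁ i h).comp ((contDiff_const.mul contDiff_id).contDiffOn) ?_
        intro s hs
        simp only [Set.mem_Icc] at hs ⊢
        constructor <;> linarith
      exact hcomp.congr fun s hs => hγeq1 s (hle s hs)
    · rw [hT2 i h, hT2 (i+1) (by omega)]
      have h' : i + 1 - k₁ = (i - k₁) + 1 := by omega
      rw [h']
      have hge : ∀ s ∈ Set.Icc ((t₂ (i - k₁) + 1)/2) ((t₂ (i - k₁ + 1) + 1)/2), (1:ℝ)/2 ≤ s := by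
        intro s hs
        have := ht₂ge (i - k₁) (by omega)
        have := hs.1; linarith
      have hcomp : ContDiffOn ℝ 1 (fun s : ℝ => γ₂ (2*s - 1))
          (Set.Icc ((t₂ (i - k₁) + 1)/2) ((t₂ (i - k₁ + 1) + 1)/2)) := by
        refine (hcd₂ (i - k₁) (by omega)).comp
          (((contDiff_const.mul contDiff_id).sub contDiff_const).contDiffOn) ?_
        intro s hs
        simp only [Set.mem_Icc] at hs ⊢
        constructor <;> linarith [hs.1, hs.2]
      exact hcomp.congr fun s hs => hγeq2 s (hge s hs)
  · intro s hs
    rcases le_or_gt s (1/2) with h | h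
    · rw [hγeq1 s h]
      exact hΩ₁ _ ⟨by linarith [hs.1], by linarith⟩
    · rw [hγeq2 s h.le]
      exact hΩ₂ _ ⟨by linarith, by linarith [hs.2]⟩
  · rw [hγeq1 0 (by norm_num)]
    norm_num [ha₁]
  · rw [hγeq2 1 (by norm_num)]
    norm_num [hb₂]

lemma reaches_all {n : ℕ} {Ω : Set (EuclideanSpace ℂ (Fin n))}
    (hΩ : IsOpen Ω) (hc : IsPreconnected Ω)
    {x y : EuclideanSpace ℂ (Fin n)} (hx : x ∈ Ω) (hy : y ∈ Ω) : Reaches Ω x y := by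
  by_contra hny
  set U : Set (EuclideanSpace ℂ (Fin n)) := {z | ∃ r > 0, ball z r ⊆ Ω ∧ Reaches Ω x z} with hU
  set V : Set (EuclideanSpace ℂ (Fin n)) := {z | ∃ r > 0, ball z r ⊆ Ω ∧ ¬ Reaches Ω x z} with hV
  have hball : ∀ {c u v : EuclideanSpace ℂ (Fin n)} {r : ℝ}, ball c r ⊆ Ω → u ∈ ball c r →
      v ∈ ball c r → Reaches Ω u v := by
    intro c u v r hsub hu hv
    exact reaches_segment fun s hs =>
      hsub ((convex_ball c r).add_smul_sub_mem hu hv hs)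
  have hUopen : IsOpen U := by
    refine Metric.isOpen_iff.mpr fun z hz => ?_
    obtain ⟨r, hr, hsub, hreach⟩ := hz
    refine ⟨r, hr, fun w hw => ?_⟩
    exact ⟨r - dist w z, by simp [dist_comm] at hw ⊢; linarith,
      fun u hu => hsub (by
        have := mem_ball'.mp hu
        exact mem_ball.mpr (by
          have h1 := mem_ball.mp hw
          calc dist u z ≤ dist u w + dist w z := dist_triangle u w z
          _ < (r - dist w z) + dist w z := by
              have := mem_ball.mp hu; linarith
          _ = r := by ring)),
      reaches_trans hreach (hball hsub (mem_ball_self hr) hw)⟩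
  have hVopen : IsOpen V := by
    refine Metric.isOpen_iff.mpr fun z hz => ?_
    obtain ⟨r, hr, hsub, hreach⟩ := hz
    refine ⟨r, hr, fun w hw => ?_⟩
    refine ⟨r - dist w z, by simp [dist_comm] at hw ⊢; linarith,
      fun u hu => hsub (by
        exact mem_ball.mpr (by
          calc dist u z ≤ dist u w + dist w z := dist_triangle u w z
          _ < (r - dist w z) + dist w z := by
              have := mem_ball.mp hu; linarith
          _ = r := by ring)), fun hreach' => ?_⟩
    exact hreach (reaches_trans hreach' (hball hsub hw (mem_ball_self hr)))
  have hcover : Ω ⊆ U ∪ V := by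
    intro z hz
    obtain ⟨r, hr, hsub⟩ := Metric.isOpen_iff.mp hΩ z hz
    by_cases h : Reaches Ω x z
    · exact Or.inl ⟨r, hr, hsub, h⟩
    · exact Or.inr ⟨r, hr, hsub, h⟩
  have hxU : x ∈ U := by
    obtain ⟨r, hr, hsub⟩ := Metric.isOpen_iff.mp hΩ x hx
    exact ⟨r, hr, hsub, reaches_self hx⟩
  have hyV : y ∈ V := by
    obtain ⟨r, hr, hsub⟩ := Metric.isOpen_iff.mp hΩ y hy
    exact ⟨r, hr, hsub, hny⟩
  obtain ⟨z, _, ⟨_, _, _, h1⟩, ⟨_, _, _, h2⟩⟩ :=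
    hc U V hUopen hVopen hcover ⟨x, hx, hxU⟩ ⟨y, hy, hyV⟩
  exact h2 h1

lemma cover : ∀ (k : ℕ) (t : ℕ → ℝ), 0 < k → (∀ i < k, t i < t (i + 1)) →
    ∀ s : ℝ, t 0 ≤ s → s ≤ t k → ∃ i, i < k ∧ t i ≤ s ∧ s ≤ t (i + 1) := by
  intro k
  induction k with
  | zero => intro t hk; omega
  | succ m ih =>
    intro t _ hlt s h0 h1
    rcases le_or_gt (t m) s with h | h
    · exact ⟨m, Nat.lt_succ_self m, h, h1⟩
    · have hm : 0 < m := by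
        rcases Nat.eq_zero_or_pos m with rfl | hm
        · exact absurd h (not_lt.mpr h0)
        · exact hm
      obtain ⟨i, hik, h2, h3⟩ := ih t hm (fun i hi => hlt i (by omega)) s h0 h.le
      exact ⟨i, by omega, h2, h3⟩

lemma continuousOn_union_closed {α E : Type*} [TopologicalSpace α] [TopologicalSpace E]
    {f : α → E} {s t : Set α} (hs : IsClosed s) (ht : IsClosed t)
    (h1 : ContinuousOn f s) (h2 : ContinuousOn f t) : ContinuousOn f (s ∪ t) := by
  intro x hx
  have c1 : ContinuousWithinAt f s x := by
    by_cases h : x ∈ s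
    · exact h1 x h
    · exact continuousWithinAt_of_notMem_closure (by rwa [hs.closure_eq])
  have c2 : ContinuousWithinAt f t x := by
    by_cases h : x ∈ t
    · exact h2 x h
    · exact continuousWithinAt_of_notMem_closure (by rwa [ht.closure_eq])
  exact c1.union c2

lemma pc1_continuousOn {n k : ℕ} {γ : ℝ → EuclideanSpace ℂ (Fin n)} {t : ℕ → ℝ}
    (hlt : ∀ i < k, t i < t (i + 1))
    (hcd : ∀ i < k, ContDiffOn ℝ 1 γ (Set.Icc (t i) (t (i + 1)))) :
    ContinuousOn γ (Set.Icc (t 0) (t k)) := by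
  have key : ∀ m, m ≤ k → ContinuousOn γ (Set.Icc (t 0) (t m)) := by
    intro m
    induction m with
    | zero => intro _; rw [Set.Icc_self]; exact continuousOn_singleton γ (t 0)
    | succ m ih =>
      intro hm
      rw [← Set.Icc_union_Icc_eq_Icc (t_mono hlt (Nat.zero_le m) (by omega))
        (hlt m (by omega)).le]
      exact continuousOn_union_closed isClosed_Icc isClosed_Icc (ih (by omega))
        (hcd m (by omega)).continuousOn
  exact key k le_rfl

lemma piece_intervalIntegrable {n : ℕ} {Ωinf : Set (EuclideanSpace ℂ (Fin n))}
    (hFcont : ContinuousOn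
      (fun pv : EuclideanSpace ℂ (Fin n) × EuclideanSpace ℂ (Fin n) =>
        kobMetric n Ωinf pv.1 pv.2) (Ωinf ×ˢ (univ : Set (EuclideanSpace ℂ (Fin n)))))
    {γ : ℝ → EuclideanSpace ℂ (Fin n)} {a b : ℝ} (hab : a < b)
    (hcd : ContDiffOn ℝ 1 γ (Set.Icc a b))
    (hγΩ : ∀ s ∈ Set.Icc a b, γ s ∈ Ωinf) :
    IntervalIntegrable (fun s => kobMetric n Ωinf (γ s) (deriv γ s))
      MeasureTheory.volume a b := by
  set dW : ℝ → EuclideanSpace ℂ (Fin n) := derivWithin γ (Set.Icc a b) with hdW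
  have hdWc : ContinuousOn dW (Set.Icc a b) :=
    hcd.continuousOn_derivWithin (uniqueDiffOn_Icc hab) le_rfl
  have hg : ContinuousOn (fun s => kobMetric n Ωinf (γ s) (dW s)) (Set.Icc a b) := by
    have := hFcont.comp (f := fun s => (γ s, dW s)) (hcd.continuousOn.prodMk hdWc)
      (fun s hs => Set.mem_prod.mpr ⟨hγΩ s hs, Set.mem_univ _⟩)
    exact this
  have hgI : IntervalIntegrable (fun s => kobMetric n Ωinf (γ s) (dW s))
      MeasureTheory.volume a b := by
    apply ContinuousOn.intervalIntegrable
    rwa [Set.uIcc_of_le hab.le]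
  rw [intervalIntegrable_iff_integrableOn_Ioc_of_le hab.le] at hgI ⊢
  refine hgI.congr_fun_ae ?_
  have h1 : ∀ᵐ s ∂(MeasureTheory.volume.restrict (Set.Ioc a b)), s ∈ Set.Ioc a b :=
    MeasureTheory.ae_restrict_mem measurableSet_Ioc
  have h2 : ∀ᵐ s : ℝ, s ∉ ({b} : Set ℝ) :=
    MeasureTheory.measure_eq_zero_iff_ae_notMem.mp (MeasureTheory.measure_singleton b)
  filter_upwards [h1, MeasureTheory.ae_restrict_of_ae h2] with s hs hs'
  have hso : s ∈ Set.Ioo a b := ⟨hs.1, lt_of_le_of_ne hs.2 (by simpa using hs')⟩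
  have : dW s = deriv γ s := derivWithin_of_mem_nhds (Icc_mem_nhds hso.1 hso.2)
  rw [this]

lemma path_intervalIntegrable {n : ℕ} {Ωinf : Set (EuclideanSpace ℂ (Fin n))}
    (hFcont : ContinuousOn
      (fun pv : EuclideanSpace ℂ (Fin n) × EuclideanSpace ℂ (Fin n) =>
        kobMetric n Ωinf pv.1 pv.2) (Ωinf ×ˢ (univ : Set (EuclideanSpace ℂ (Fin n)))))
    {γ : ℝ → EuclideanSpace ℂ (Fin n)} {k : ℕ} {t : ℕ → ℝ}
    (hk : 0 < k) (h0 : t 0 = 0) (h1 : t k = 1)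
    (hlt : ∀ i < k, t i < t (i + 1))
    (hcd : ∀ i < k, ContDiffOn ℝ 1 γ (Set.Icc (t i) (t (i + 1))))
    (hγΩ : ∀ s ∈ Set.Icc (0 : ℝ) 1, γ s ∈ Ωinf) :
    IntervalIntegrable (fun s => kobMetric n Ωinf (γ s) (deriv γ s))
      MeasureTheory.volume 0 1 := by
  have hsub : ∀ i < k, Set.Icc (t i) (t (i + 1)) ⊆ Set.Icc (0 : ℝ) 1 := by
    intro i hi
    rw [← h0, ← h1]
    exact Set.Icc_subset_Icc (t_mono hlt (Nat.zero_le i) (by omega))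
      (t_mono hlt (by omega) le_rfl)
  have key : ∀ m, m ≤ k → IntervalIntegrable
      (fun s => kobMetric n Ωinf (γ s) (deriv γ s)) MeasureTheory.volume (t 0) (t m) := by
    intro m
    induction m with
    | zero => intro _; exact IntervalIntegrable.refl
    | succ m ih =>
      intro hm
      exact (ih (by omega)).trans
        (piece_intervalIntegrable hFcont (hlt m (by omega)) (hcd m (by omega))
          (fun s hs => hγΩ s (hsub m (by omega) hs)))
  rw [← h0, ← h1]
  exact key k le_rfl

lemma kobDist_nonneg (n : ℕ) (Ω : Set (EuclideanSpace ℂ (Fin n)))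
    (x y : EuclideanSpace ℂ (Fin n)) : 0 ≤ kobDist n Ω x y := by
  refine Real.sInf_nonneg fun r hr => ?_
  obtain ⟨γ, _, _, _, _, rfl⟩ := hr
  exact intervalIntegral.integral_nonneg zero_le_one fun u _ => kobMetric_nonneg n Ω _ _

end Stmt14Aux

open Stmt14Aux in
theorem stmt_14 (n : ℕ)
    (Ωs : ℕ → Set (EuclideanSpace ℂ (Fin n)))
    (hopen : ∀ j, IsOpen (Ωs j)) (hconn : ∀ j, IsConnected (Ωs j))
    (Ωinf : Set (EuclideanSpace ℂ (Fin n)))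
    (hinfo : IsOpen Ωinf) (hinfc : IsConnected Ωinf)
    (hcpt : ∀ K ⊆ Ωinf, IsCompact K → ∃ j0, ∀ j ≥ j0, K ⊆ Ωs j)
    (hFconv : ∀ K : Set (EuclideanSpace ℂ (Fin n) × EuclideanSpace ℂ (Fin n)),
      IsCompact K → K ⊆ Ωinf ×ˢ (univ : Set (EuclideanSpace ℂ (Fin n))) →
      TendstoUniformlyOn (fun j pv => kobMetric n (Ωs j) pv.1 pv.2)
        (fun pv => kobMetric n Ωinf pv.1 pv.2) atTop K)
    (hFcont : ContinuousOn
      (fun pv : EuclideanSpace ℂ (Fin n) × EuclideanSpace ℂ (Fin n) =>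
        kobMetric n Ωinf pv.1 pv.2)
      (Ωinf ×ˢ (univ : Set (EuclideanSpace ℂ (Fin n)))))
    (x y : EuclideanSpace ℂ (Fin n)) (hx : x ∈ Ωinf) (hy : y ∈ Ωinf) :
    limsup (fun j => kobDist n (Ωs j) x y) atTop ≤ kobDist n Ωinf x y := by
  classical
  obtain ⟨γ0, hpc0, hΩ0, h00, h01⟩ := reaches_all hinfo hinfc.isPreconnected hx hy
  rw [kobDist]
  refine le_csInf ⟨_, γ0, hpc0, hΩ0, h00, h01, rfl⟩ ?_
  rintro r ⟨γ, hpc1, hγΩ, hγ0, hγ1, rfl⟩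
  obtain ⟨k, t, hk, h0, h1, hlt, hcd⟩ := hpc1
  set finf : ℝ → ℝ := fun s => kobMetric n Ωinf (γ s) (deriv γ s) with hfinfdef
  -- continuity and compact image of the path
  have hγc : ContinuousOn γ (Set.Icc (0 : ℝ) 1) := by
    have := pc1_continuousOn hlt hcd
    rwa [h0, h1] at this
  have hCc : IsCompact (γ '' Set.Icc (0 : ℝ) 1) := isCompact_Icc.image_of_continuousOn hγc
  have hCΩ : γ '' Set.Icc (0 : ℝ) 1 ⊆ Ωinf := by
    rintro _ ⟨s, hs, rfl⟩; exact hγΩ s hs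
  -- a uniform bound on the piecewise derivatives
  have hRi : ∀ i, ∃ R : ℝ, ∀ s ∈ Set.Icc (t i) (t (i + 1)), i < k →
      ‖derivWithin γ (Set.Icc (t i) (t (i + 1))) s‖ ≤ R := by
    intro i
    by_cases hi : i < k
    · obtain ⟨R, hR⟩ := isCompact_Icc.exists_bound_of_continuousOn
        ((hcd i hi).continuousOn_derivWithin (uniqueDiffOn_Icc (hlt i hi)) le_rfl)
      exact ⟨R, fun s hs _ => hR s hs⟩
    · exact ⟨0, fun s hs hik => absurd hik hi⟩
  choose Rf hRf using hRi
  obtain ⟨R, hRb⟩ := Finset.exists_le ((Finset.range k).image Rf)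
  have hRb' : ∀ i < k, Rf i ≤ R := fun i hi =>
    hRb _ (Finset.mem_image_of_mem Rf (Finset.mem_range.mpr hi))
  set K : Set (EuclideanSpace ℂ (Fin n) × EuclideanSpace ℂ (Fin n)) :=
    (γ '' Set.Icc (0 : ℝ) 1) ×ˢ closedBall (0 : EuclideanSpace ℂ (Fin n)) R with hK
  have hKc : IsCompact K := hCc.prod (isCompact_closedBall _ _)
  have hKsub : K ⊆ Ωinf ×ˢ (univ : Set (EuclideanSpace ℂ (Fin n))) :=
    Set.prod_mono hCΩ (Set.subset_univ _)
  have hmem : ∀ s ∈ Set.Icc (0 : ℝ) 1 \ (t '' Set.Iic k), (γ s, deriv γ s) ∈ K := by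
    rintro s ⟨hs, hs'⟩
    obtain ⟨i, hik, hi1, hi2⟩ := cover k t hk hlt s (h0 ▸ hs.1) (h1 ▸ hs.2)
    have hne1 : s ≠ t i := fun h => hs' ⟨i, Set.mem_Iic.mpr (by omega), h.symm⟩
    have hne2 : s ≠ t (i + 1) := fun h => hs' ⟨i + 1, Set.mem_Iic.mpr (by omega), h.symm⟩
    have hso : s ∈ Set.Ioo (t i) (t (i + 1)) :=
      ⟨lt_of_le_of_ne hi1 (Ne.symm hne1), lt_of_le_of_ne hi2 hne2⟩
    have hder : deriv γ s = derivWithin γ (Set.Icc (t i) (t (i + 1))) s :=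
      (derivWithin_of_mem_nhds (Icc_mem_nhds hso.1 hso.2)).symm
    refine ⟨Set.mem_image_of_mem γ hs, ?_⟩
    rw [mem_closedBall_zero_iff, hder]
    exact (hRf i s ⟨hi1, hi2⟩ hik).trans (hRb' i hik)
  have hIIinf : IntervalIntegrable finf MeasureTheory.volume 0 1 :=
    path_intervalIntegrable hFcont hk h0 h1 hlt hcd hγΩ
  have hrnn : 0 ≤ ∫ s in (0:ℝ)..1, finf s :=
    intervalIntegral.integral_nonneg zero_le_one fun u _ => kobMetric_nonneg n Ωinf _ _
  have key : ∀ ε : ℝ, 0 < ε →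
      limsup (fun j => kobDist n (Ωs j) x y) atTop ≤ (∫ s in (0:ℝ)..1, finf s) + ε := by
    intro ε hε
    have huni := (Metric.tendstoUniformlyOn_iff.mp (hFconv K hKc hKsub)) ε hε
    obtain ⟨j0, hj0⟩ := hcpt (γ '' Set.Icc (0 : ℝ) 1) hCΩ hCc
    have hincl : ∀ᶠ j in atTop, γ '' Set.Icc (0 : ℝ) 1 ⊆ Ωs j := eventually_atTop.mpr ⟨j0, hj0⟩
    have hev : ∀ᶠ j in atTop, kobDist n (Ωs j) x y ≤ (∫ s in (0:ℝ)..1, finf s) + ε := by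
      filter_upwards [huni, hincl] with j hj hjincl
      set fj : ℝ → ℝ := fun s => kobMetric n (Ωs j) (γ s) (deriv γ s) with hfj
      have hmemSj : (∫ s in (0:ℝ)..1, fj s) ∈ {r : ℝ | ∃ γ' : ℝ → EuclideanSpace ℂ (Fin n),
          PiecewiseC1 γ' ∧ (∀ u ∈ Set.Icc (0 : ℝ) 1, γ' u ∈ Ωs j) ∧ γ' 0 = x ∧ γ' 1 = y ∧
          r = ∫ u in (0 : ℝ)..1, kobMetric n (Ωs j) (γ' u) (deriv γ' u)} :=
        ⟨γ, ⟨k, t, hk, h0, h1, hlt, hcd⟩,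
          fun u hu => hjincl (Set.mem_image_of_mem γ hu), hγ0, hγ1, rfl⟩
      have hle1 : kobDist n (Ωs j) x y ≤ ∫ s in (0:ℝ)..1, fj s := by
        refine csInf_le ⟨0, ?_⟩ hmemSj
        rintro r' ⟨γ', _, _, _, _, rfl⟩
        exact intervalIntegral.integral_nonneg zero_le_one fun u _ =>
          kobMetric_nonneg n (Ωs j) _ _
      have hle2 : (∫ s in (0:ℝ)..1, fj s) ≤ (∫ s in (0:ℝ)..1, finf s) + ε := by
        by_cases hIIj : IntervalIntegrable fj MeasureTheory.volume 0 1
        · have hae : fj ≤ᵐ[MeasureTheory.volume.restrict (Set.Icc (0:ℝ) 1)]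
              fun s => finf s + ε := by
            have hT : MeasureTheory.volume (t '' Set.Iic k) = 0 :=
              ((Set.finite_Iic k).image t).measure_zero _
            have h2 : ∀ᵐ s : ℝ, s ∉ t '' Set.Iic k :=
              MeasureTheory.measure_eq_zero_iff_ae_notMem.mp hT
            filter_upwards [MeasureTheory.ae_restrict_mem measurableSet_Icc,
              MeasureTheory.ae_restrict_of_ae h2] with s hs hs'
            have hKmem := hmem s ⟨hs, hs'⟩
            have hd := hj _ hKmem
            rw [Real.dist_eq] at hd
            have habs := abs_lt.mp hd
            have : finf s - fj s > -ε := habs.1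
            simp only [hfj, hfinfdef] at this ⊢
            linarith
          calc (∫ s in (0:ℝ)..1, fj s)
              ≤ ∫ s in (0:ℝ)..1, (finf s + ε) :=
                intervalIntegral.integral_mono_ae_restrict zero_le_one hIIj
                  (hIIinf.add intervalIntegrable_const) hae
            _ = (∫ s in (0:ℝ)..1, finf s) + ε := by
                rw [intervalIntegral.integral_add hIIinf intervalIntegrable_const,
                  intervalIntegral.integral_const]
                simp
        · rw [intervalIntegral.integral_undef hIIj]
          linarith
      linarith
    exact Filter.limsup_le_of_le (Filter.isCoboundedUnder_le_of_le atTop fun j => kobDist_nonneg n (Ωs j) x y) hev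
  by_contra hcon
  push_neg at hcon
  have := key ((limsup (fun j => kobDist n (Ωs j) x y) atTop - ∫ s in (0:ℝ)..1, finf s) / 2)
    (by linarith)
  linarith
end
end
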